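/- arXiv:1010.2985 — 14 statements merged into one kernel-verified Lean document; each statement's English description precedes it below -/
import Mathlib

section
/- Let A₁, A₂, ..., Aₙ be n distinct subsets of an n-element set X. Then there exists an element x of X such that the sets A₁ \ {x}, A₂ \ {x}, ..., Aₙ \ {x} are all distinct. -/
/-- **Bondy's theorem.** If `A₁, …, Aₙ` are `n` distinct subsets of an `n`-set `X`,
then there is an element `x ∈ X` such that the sets `Aᵢ \ {x}` are all distinct. -/
theorem bondy_theorem {X : Type} [Fintype X] [DecidableEq X] {n : ℕ} (hn : 0 < n)
    (hX : Fintype.card X = n) (A : Fin n → Finset X) (hA : Function.Injective A) :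
    ∃ x : X, Function.Injective (fun i : Fin n => A i \ {x}) := by
  by_contra h
  push_neg at h
  -- indicator vectors over ZMod 2
  set ind : Fin n → X → ZMod 2 := fun i a => if a ∈ A i then 1 else 0 with hind
  have z : Fin n := ⟨0, hn⟩
  set w : Fin n → X → ZMod 2 := fun i => ind i - ind z with hw
  -- key: each standard basis vector is a difference
  have key : ∀ x : X, (fun y => if x = y then (1 : ZMod 2) else 0) ∈
      Submodule.span (ZMod 2) (Set.range w) := by
    intro x
    obtain ⟨i, j, hij, hne⟩ := Function.not_injective_iff.mp (h x)
    have hx : ∀ y : X, y ≠ x → (y ∈ A i ↔ y ∈ A j) := by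
      intro y hy
      constructor <;> intro hmem
      · have : y ∈ A i \ {x} := by simp [hmem, hy]
        rw [hij] at this; exact (Finset.mem_sdiff.mp this).1
      · have : y ∈ A j \ {x} := by simp [hmem, hy]
        rw [← hij] at this; exact (Finset.mem_sdiff.mp this).1
    have hxdiff : ¬ (x ∈ A i ↔ x ∈ A j) := by
      intro hiff
      apply hne
      apply hA
      ext y
      by_cases hy : y = x
      · subst hy; exact hiff
      · exact hx y hy
    have : (fun y => if x = y then (1 : ZMod 2) else 0) = ind i - ind j := by
      funext y
      by_cases hy : y = x
      · subst hy
        rcases Decidable.em (y ∈ A i) with h1 | h1 <;>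
          rcases Decidable.em (y ∈ A j) with h2 | h2 <;>
            simp [hind, h1, h2] at hxdiff ⊢ <;> decide
      · have hxy : x ≠ y := fun hh => hy hh.symm
        by_cases h1 : y ∈ A i
        · simp [hind, hxy, h1, (hx y hy).mp h1]
        · have h2 : y ∉ A j := fun h2 => h1 ((hx y hy).mpr h2)
          simp [hind, hxy, h1, h2]
    rw [this]
    have : ind i - ind j = w i - w j := by simp only [hw]; abel
    rw [this]
    exact sub_mem (Submodule.subset_span ⟨i, rfl⟩) (Submodule.subset_span ⟨j, rfl⟩)
  -- the span is everything
  have htop : Submodule.span (ZMod 2) (Set.range w) = ⊤ := by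
    rw [eq_top_iff]
    intro v _
    rw [pi_eq_sum_univ v]
    exact Submodule.sum_mem _ fun x _ => Submodule.smul_mem _ _ (key x)
  -- but the span is generated by ≤ n-1 vectors
  set s : Finset (X → ZMod 2) := (Finset.univ.erase z).image w with hs
  have hle : Submodule.span (ZMod 2) (Set.range w) ≤ Submodule.span (ZMod 2) (s : Set (X → ZMod 2)) := by
    rw [Submodule.span_le]
    rintro _ ⟨i, rfl⟩
    by_cases hi : i = z
    · have : w i = 0 := by rw [hi]; simp [hw]
      rw [this]; exact Submodule.zero_mem _
    · exact Submodule.subset_span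
        (Finset.mem_coe.mpr (Finset.mem_image.mpr ⟨i, by simp [hi], rfl⟩))
  have hstop : Submodule.span (ZMod 2) (s : Set (X → ZMod 2)) = ⊤ :=
    eq_top_iff.mpr (htop ▸ hle)
  have h1 : Module.finrank (ZMod 2) (X → ZMod 2) ≤ s.card := by
    have := finrank_span_finset_le_card (R := ZMod 2) s
    rwa [Set.finrank, hstop, finrank_top] at this
  have h2 : s.card ≤ n - 1 := by
    calc s.card ≤ (Finset.univ.erase z).card := Finset.card_image_le
    _ = n - 1 := by simp [Finset.card_erase_of_mem]
  rw [Module.finrank_fintype_fun_eq_card, hX] at h1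
  omega
end

section
/- Let X be a finite set and let 𝒜 be a family of distinct nonempty subsets of X with |𝒜| < |X|. Then there exists a subset X' of X with |X'| = |X| - |𝒜| such that the sets A ∩ (X \ X') for A ∈ 𝒜 are all distinct and all nonempty. -/
/-- Trace version of Bondy's theorem: a nonempty family `ℬ` of distinct sets admits a
distinguishing set `Y` with `|Y| ≤ |ℬ| - 1`. -/
lemma trace_bondy {X : Type} [DecidableEq X] :
    ∀ n (ℬ : Finset (Finset X)), ℬ.card ≤ n → ℬ.Nonempty →
    ∃ Y : Finset X, Y.card + 1 ≤ ℬ.card ∧ Set.InjOn (fun A : Finset X => A ∩ Y) ↑ℬ := by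
  intro n
  induction n with
  | zero =>
    intro ℬ h hne
    have := Finset.card_pos.mpr hne
    omega
  | succ n ih =>
    intro ℬ hcard hne
    by_cases hc : ℬ.card ≤ 1
    · refine ⟨∅, by simpa using Finset.card_pos.mpr hne, ?_⟩
      intro A hA B hB _
      exact Finset.card_le_one.mp hc A hA B hB
    · push_neg at hc
      obtain ⟨A, hA, B, hB, hAB⟩ := Finset.one_lt_card.mp hc
      have hx : ∃ x : X, ¬ (x ∈ A ↔ x ∈ B) := by
        by_contra h
        push_neg at h
        exact hAB (Finset.ext fun x => h x)
      obtain ⟨x, hx⟩ := hx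
      set ℬ₁ := ℬ.filter (fun C => x ∈ C) with hB1
      set ℬ₀ := ℬ.filter (fun C => x ∉ C) with hB0
      have hsum : ℬ₁.card + ℬ₀.card = ℬ.card :=
        Finset.card_filter_add_card_filter_not (fun C => x ∈ C)
      have hne1 : ℬ₁.Nonempty := by
        rcases Decidable.em (x ∈ A) with h1 | h1
        · exact ⟨A, Finset.mem_filter.mpr ⟨hA, h1⟩⟩
        · exact ⟨B, Finset.mem_filter.mpr ⟨hB, by tauto⟩⟩
      have hne0 : ℬ₀.Nonempty := by
        rcases Decidable.em (x ∈ A) with h1 | h1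
        · exact ⟨B, Finset.mem_filter.mpr ⟨hB, by tauto⟩⟩
        · exact ⟨A, Finset.mem_filter.mpr ⟨hA, h1⟩⟩
      have hc1 : 0 < ℬ₁.card := Finset.card_pos.mpr hne1
      have hc0 : 0 < ℬ₀.card := Finset.card_pos.mpr hne0
      obtain ⟨Y₁, hY₁, inj₁⟩ := ih ℬ₁ (by omega) hne1
      obtain ⟨Y₀, hY₀, inj₀⟩ := ih ℬ₀ (by omega) hne0
      refine ⟨insert x (Y₀ ∪ Y₁), ?_, ?_⟩
      · have h1 : (insert x (Y₀ ∪ Y₁)).card ≤ (Y₀ ∪ Y₁).card + 1 :=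
          Finset.card_insert_le _ _
        have h2 : (Y₀ ∪ Y₁).card ≤ Y₀.card + Y₁.card := Finset.card_union_le _ _
        omega
      · intro C hC D hD h
        simp only at h
        set Y := insert x (Y₀ ∪ Y₁) with hY
        have hxY : x ∈ Y := Finset.mem_insert_self _ _
        have hxCD : x ∈ C ↔ x ∈ D := by
          constructor
          · intro h1
            have : x ∈ C ∩ Y := Finset.mem_inter.mpr ⟨h1, hxY⟩
            rw [h] at this
            exact (Finset.mem_inter.mp this).1
          · intro h1
            have : x ∈ D ∩ Y := Finset.mem_inter.mpr ⟨h1, hxY⟩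
            rw [← h] at this
            exact (Finset.mem_inter.mp this).1
        rcases Decidable.em (x ∈ C) with h1 | h1
        · -- both in ℬ₁
          have hC1 : C ∈ ℬ₁ := Finset.mem_filter.mpr ⟨hC, h1⟩
          have hD1 : D ∈ ℬ₁ := Finset.mem_filter.mpr ⟨hD, hxCD.mp h1⟩
          have hsub : Y₁ ⊆ Y := by
            intro y hy
            exact Finset.mem_insert_of_mem (Finset.mem_union_right _ hy)
          have key : C ∩ Y₁ = D ∩ Y₁ := by
            have e1 : C ∩ Y₁ = (C ∩ Y) ∩ Y₁ := by
              rw [Finset.inter_assoc, Finset.inter_eq_right.mpr hsub]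
            have e2 : D ∩ Y₁ = (D ∩ Y) ∩ Y₁ := by
              rw [Finset.inter_assoc, Finset.inter_eq_right.mpr hsub]
            rw [e1, e2, h]
          exact inj₁ (Finset.mem_coe.mpr hC1) (Finset.mem_coe.mpr hD1) key
        · have hC0 : C ∈ ℬ₀ := Finset.mem_filter.mpr ⟨hC, h1⟩
          have hD0 : D ∈ ℬ₀ := Finset.mem_filter.mpr ⟨hD, fun hd => h1 (hxCD.mpr hd)⟩
          have hsub : Y₀ ⊆ Y := by
            intro y hy
            exact Finset.mem_insert_of_mem (Finset.mem_union_left _ hy)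
          have key : C ∩ Y₀ = D ∩ Y₀ := by
            have e1 : C ∩ Y₀ = (C ∩ Y) ∩ Y₀ := by
              rw [Finset.inter_assoc, Finset.inter_eq_right.mpr hsub]
            have e2 : D ∩ Y₀ = (D ∩ Y) ∩ Y₀ := by
              rw [Finset.inter_assoc, Finset.inter_eq_right.mpr hsub]
            rw [e1, e2, h]
          exact inj₀ (Finset.mem_coe.mpr hC0) (Finset.mem_coe.mpr hD0) key

/-- If `𝒜` is a family of distinct nonempty subsets of a finite set `X` with `|𝒜| < |X|`,
then there is a subset `X' ⊆ X` with `|X'| = |X| - |𝒜|` such that the sets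
`A ∩ (X \ X') = A \ X'` for `A ∈ 𝒜` are all distinct and nonempty. -/
theorem bondy_extended_nonempty {X : Type} [Fintype X] [DecidableEq X]
    (𝒜 : Finset (Finset X)) (hcard : 𝒜.card < Fintype.card X)
    (hne : ∀ A ∈ 𝒜, A.Nonempty) :
    ∃ X' : Finset X, X'.card = Fintype.card X - 𝒜.card ∧
      Set.InjOn (fun A : Finset X => A \ X') ↑𝒜 ∧
      ∀ A ∈ 𝒜, (A \ X').Nonempty := by
  have hempty : (∅ : Finset X) ∉ 𝒜 := by
    intro h
    exact Finset.not_nonempty_empty (hne ∅ h)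
  set ℬ := insert (∅ : Finset X) 𝒜 with hBdef
  have hBcard : ℬ.card = 𝒜.card + 1 := Finset.card_insert_of_notMem hempty
  obtain ⟨Y, hYcard, hinj⟩ := trace_bondy ℬ.card ℬ le_rfl ⟨∅, Finset.mem_insert_self _ _⟩
  have hYle : Y.card ≤ 𝒜.card := by omega
  obtain ⟨Z, hYZ, _, hZcard⟩ :=
    Finset.exists_subsuperset_card_eq (Finset.subset_univ Y) hYle
      (by simpa using hcard.le)
  -- key: trace on Z also injective on ℬ
  have hZY : Z ∩ Y = Y := Finset.inter_eq_right.mpr hYZ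
  have hinjZ : Set.InjOn (fun A : Finset X => A ∩ Z) ↑ℬ := by
    intro A hA B hB h
    simp only at h
    have : A ∩ Y = B ∩ Y := by
      have e1 : A ∩ Y = (A ∩ Z) ∩ Y := by rw [Finset.inter_assoc, hZY]
      have e2 : B ∩ Y = (B ∩ Z) ∩ Y := by rw [Finset.inter_assoc, hZY]
      rw [e1, e2, h]
    exact hinj hA hB this
  have hsd : ∀ A : Finset X, A \ Zᶜ = A ∩ Z := by
    intro A
    ext y
    simp only [Finset.mem_sdiff, Finset.mem_compl, Finset.mem_inter, not_not]
  refine ⟨Zᶜ, ?_, ?_, ?_⟩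
  · rw [Finset.card_compl, hZcard]
  · intro A hA B hB h
    simp only [hsd] at h
    exact hinjZ (Finset.mem_coe.mpr (Finset.mem_insert_of_mem (Finset.mem_coe.mp hA)))
      (Finset.mem_coe.mpr (Finset.mem_insert_of_mem (Finset.mem_coe.mp hB))) h
  · intro A hA
    rw [Finset.nonempty_iff_ne_empty]
    intro h
    have h' : A ∩ Z = (∅ : Finset X) ∩ Z := by
      rw [← hsd, h]
      simp
    have := hinjZ (Finset.mem_coe.mpr (Finset.mem_insert_of_mem hA))
      (Finset.mem_coe.mpr (Finset.mem_insert_self _ _)) h'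
    rw [this] at hA
    exact hempty hA
end

section
/- Every finite twin-free digraph D admits a separating code of size at most |V(D)| - 1; that is, there exists a vertex x such that removing x from the code V(D) still separates all pairs of vertices: for all distinct u, v, B₁⁺(u) ∩ (V(D) \ {x}) ≠ B₁⁺(v) ∩ (V(D) \ {x}). -/
def inBall {V : Type} (A : V → V → Prop) (x : V) : Set V := insert x {w | A w x}

def IsSepCode {V : Type} (A : V → V → Prop) (C : Set V) : Prop :=
  ∀ u v : V, u ≠ v → inBall A u ∩ C ≠ inBall A v ∩ C

def IsIdCode {V : Type} (A : V → V → Prop) (C : Set V) : Prop :=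
  (∀ u : V, (inBall A u ∩ C).Nonempty) ∧ IsSepCode A C

def TwinFree {V : Type} (A : V → V → Prop) : Prop :=
  ∀ u v : V, u ≠ v → inBall A u ≠ inBall A v

/-- Every finite twin-free digraph admits a separating code of size `|V(D)| - 1`:
some vertex `x` can be removed from the whole vertex set while still separating
all pairs of vertices. -/
theorem sepCode_of_twinFree {V : Type} [Fintype V] [Nonempty V] (A : V → V → Prop)
    (h : TwinFree A) :
    ∃ x : V, IsSepCode A ({x}ᶜ : Set V) := by
  classical
  by_contra hc
  push_neg at hc
  obtain ⟨u0⟩ := ‹Nonempty V›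
  set f : V → V → ZMod 2 := fun u w => if w ∈ inBall A u then 1 else 0 with hf
  set g : V → V → ZMod 2 := fun u => f u - f u0 with hg
  set s : Finset (V → ZMod 2) := (Finset.univ.erase u0).image g with hs
  have hgmem : ∀ u : V, g u ∈ Submodule.span (ZMod 2) (s : Set (V → ZMod 2)) := by
    intro u
    by_cases hu : u = u0
    · have : g u = 0 := by simp [hg, hu]
      rw [this]; exact Submodule.zero_mem _
    · exact Submodule.subset_span (by
        simp only [hs, Finset.coe_image, Set.mem_image, Finset.coe_erase]
        exact ⟨u, by simp [hu], rfl⟩)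
  have key : ∀ x : V, Pi.single x (1 : ZMod 2) ∈
      Submodule.span (ZMod 2) (s : Set (V → ZMod 2)) := by
    intro x
    have hx := hc x
    unfold IsSepCode at hx
    push_neg at hx
    obtain ⟨u, v, huv, heq⟩ := hx
    have hagree : ∀ w : V, w ≠ x → (w ∈ inBall A u ↔ w ∈ inBall A v) := by
      intro w hw
      have := Set.ext_iff.mp heq w
      simpa [hw] using this
    have hdiffx : ¬ (x ∈ inBall A u ↔ x ∈ inBall A v) := by
      intro hcon
      apply h u v huv
      ext y
      by_cases hy : y = x
      · subst hy; exact hcon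
      · exact hagree y hy
    have hdiff : f u - f v = Pi.single x 1 := by
      funext w
      by_cases hw : w = x
      · subst hw
        simp only [Pi.sub_apply, Pi.single_eq_same, hf]
        by_cases hu' : w ∈ inBall A u
        · have hv' : w ∉ inBall A v := fun hv' => hdiffx ⟨fun _ => hv', fun _ => hu'⟩
          simp [hu', hv']
        · have hv' : w ∈ inBall A v := by
            by_contra hv'
            exact hdiffx ⟨fun h' => absurd h' hu', fun h' => absurd h' hv'⟩
          simp [hu', hv']
      · have hiff := hagree w hw
        simp only [Pi.sub_apply, Pi.single_eq_of_ne hw, hf]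
        by_cases hm : w ∈ inBall A u
        · simp [hm, hiff.mp hm]
        · have hv : w ∉ inBall A v := fun h' => hm (hiff.mpr h')
          simp [hm, hv]
    have : Pi.single x (1 : ZMod 2) = g u - g v := by
      rw [← hdiff, hg]; simp only [sub_sub_sub_cancel_right]
    rw [this]
    exact Submodule.sub_mem _ (hgmem u) (hgmem v)
  have htop : (⊤ : Submodule (ZMod 2) (V → ZMod 2)) ≤
      Submodule.span (ZMod 2) (s : Set (V → ZMod 2)) := by
    rw [← (Pi.basisFun (ZMod 2) V).span_eq]
    apply Submodule.span_le.mpr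
    rintro _ ⟨x, rfl⟩
    rw [Pi.basisFun_apply]
    exact key x
  have hrank1 : Fintype.card V ≤ Module.finrank (ZMod 2)
      (Submodule.span (ZMod 2) (s : Set (V → ZMod 2))) := by
    calc Fintype.card V = Module.finrank (ZMod 2) (V → ZMod 2) := by
          rw [Module.finrank_pi]
      _ = Module.finrank (ZMod 2) (⊤ : Submodule (ZMod 2) (V → ZMod 2)) :=
          (finrank_top _ _).symm
      _ ≤ _ := Submodule.finrank_mono htop
  have hrank2 : Module.finrank (ZMod 2)
      (Submodule.span (ZMod 2) (s : Set (V → ZMod 2))) ≤ Fintype.card V - 1 := by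
    refine (finrank_span_finset_le_card s).trans ?_
    calc s.card ≤ (Finset.univ.erase u0).card := Finset.card_image_le
      _ = Fintype.card V - 1 := by rw [Finset.card_erase_of_mem (Finset.mem_univ u0),
          Finset.card_univ]
  have hpos : 0 < Fintype.card V := Fintype.card_pos
  omega
end

section
/- Let D be a finite twin-free digraph and S a subset of vertices such that the induced subdigraph D - S is twin-free. Then the minimum size of an identifying code of D is at most the minimum size of an identifying code of D - S plus |S|. -/
/-- The minimum size of an identifying code of a digraph `(V, A)`. -/
noncomputable def gammaID {V : Type} (A : V → V → Prop) : ℕ :=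
  sInf {n | ∃ C : Set V, IsIdCode A C ∧ C.ncard = n}

/-- Traces w.r.t. a larger code determine traces w.r.t. a smaller one. -/
lemma trace_mono {V : Type} (A : V → V → Prop) {C C₂ : Set V} (h : C ⊆ C₂) (u v : V)
    (he : inBall A u ∩ C₂ = inBall A v ∩ C₂) : inBall A u ∩ C = inBall A v ∩ C := by
  have h1 : inBall A u ∩ C = (inBall A u ∩ C₂) ∩ C := by
    ext x; constructor
    · rintro ⟨hx, hxC⟩; exact ⟨⟨hx, h hxC⟩, hxC⟩
    · rintro ⟨⟨hx, _⟩, hxC⟩; exact ⟨hx, hxC⟩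
  have h2 : inBall A v ∩ C = (inBall A v ∩ C₂) ∩ C := by
    ext x; constructor
    · rintro ⟨hx, hxC⟩; exact ⟨⟨hx, h hxC⟩, hxC⟩
    · rintro ⟨⟨hx, _⟩, hxC⟩; exact ⟨hx, hxC⟩
  rw [h1, h2, he]

/-- One step: extend a code that dominates and separates `W` to one handling `insert s W`,
adding at most one vertex. -/
lemma step_lemma {V : Type} (A : V → V → Prop) (hD : TwinFree A) (W C : Set V) (s : V)
    (hdom : ∀ u ∈ W, (inBall A u ∩ C).Nonempty)
    (hsep : ∀ u ∈ W, ∀ v ∈ W, u ≠ v → inBall A u ∩ C ≠ inBall A v ∩ C) :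
    ∃ C₂ : Set V, C₂.ncard ≤ C.ncard + 1 ∧
      (∀ u ∈ insert s W, (inBall A u ∩ C₂).Nonempty) ∧
      (∀ u ∈ insert s W, ∀ v ∈ insert s W, u ≠ v →
        inBall A u ∩ C₂ ≠ inBall A v ∩ C₂) := by
  classical
  by_cases hsW : s ∈ W
  · refine ⟨C, Nat.le_succ _, ?_, ?_⟩
    · intro u hu
      rcases hu with rfl | hu
      · exact hdom u hsW
      · exact hdom u hu
    · intro u hu v hv hne
      rcases hu with rfl | hu <;> rcases hv with rfl | hv
      · exact absurd rfl hne
      · exact hsep u hsW v hv hne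
      · exact hsep u hu v hsW hne
      · exact hsep u hu v hv hne
  by_cases hconf : ∃ w ∈ W, inBall A s ∩ C = inBall A w ∩ C
  · -- conflict case: pick witness x separating s from its unique conflict partner w
    obtain ⟨w, hwW, hwe⟩ := hconf
    have hsw : s ≠ w := fun h => hsW (h ▸ hwW)
    have hne : inBall A s ≠ inBall A w := hD s w hsw
    have hx : ∃ x, ¬ (x ∈ inBall A s ↔ x ∈ inBall A w) := by
      by_contra h
      push_neg at h
      exact hne (Set.ext fun x => h x)
    obtain ⟨x, hx⟩ := hx
    refine ⟨insert x C, Set.ncard_insert_le _ _, ?_, ?_⟩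
    · -- domination
      intro u hu
      rcases hu with rfl | hu
      · obtain ⟨c, hc⟩ := hdom w hwW
        rw [← hwe] at hc
        exact ⟨c, hc.1, Set.mem_insert_of_mem _ hc.2⟩
      · obtain ⟨c, hc⟩ := hdom u hu
        exact ⟨c, hc.1, Set.mem_insert_of_mem _ hc.2⟩
    · -- separation
      have hCsub : C ⊆ insert x C := Set.subset_insert _ _
      have key : ∀ v ∈ W, inBall A s ∩ insert x C ≠ inBall A v ∩ insert x C := by
        intro v hv heq
        have hold := trace_mono A hCsub s v heq
        by_cases hvw : v = w
        · subst hvw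
          have h1 := Set.ext_iff.mp heq x
          exact hx ⟨fun h => (h1.mp ⟨h, Set.mem_insert x C⟩).1,
            fun h => (h1.mpr ⟨h, Set.mem_insert x C⟩).1⟩
        · exact hsep v hv w hwW hvw (hold ▸ hwe)
      intro u hu v hv huv
      rcases hu with rfl | hu <;> rcases hv with rfl | hv
      · exact absurd rfl huv
      · exact key v hv
      · exact fun h => key u hu h.symm
      · intro heq
        exact hsep u hu v hv huv (trace_mono A hCsub u v heq)
  · -- no conflict: add s itself (harmless; needed only if s undominated)
    push_neg at hconf
    refine ⟨insert s C, Set.ncard_insert_le _ _, ?_, ?_⟩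
    · intro u hu
      rcases hu with rfl | hu
      · exact ⟨u, Set.mem_insert u _, Set.mem_insert u C⟩
      · obtain ⟨c, hc⟩ := hdom u hu
        exact ⟨c, hc.1, Set.mem_insert_of_mem _ hc.2⟩
    · have hCsub : C ⊆ insert s C := Set.subset_insert _ _
      have key : ∀ v ∈ W, inBall A s ∩ insert s C ≠ inBall A v ∩ insert s C := by
        intro v hv heq
        exact hconf v hv (trace_mono A hCsub s v heq)
      intro u hu v hv huv
      rcases hu with rfl | hu <;> rcases hv with rfl | hv
      · exact absurd rfl huv
      · exact key v hv
      · exact fun h => key u hu h.symm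
      · intro heq
        exact hsep u hu v hv huv (trace_mono A hCsub u v heq)

/-- Iterate the step lemma over a finite set `T`. -/
lemma extend_lemma {V : Type} (A : V → V → Prop) (hD : TwinFree A) (W C : Set V)
    (hdom : ∀ u ∈ W, (inBall A u ∩ C).Nonempty)
    (hsep : ∀ u ∈ W, ∀ v ∈ W, u ≠ v → inBall A u ∩ C ≠ inBall A v ∩ C)
    (T : Set V) (hT : T.Finite) :
    ∃ C₂ : Set V, C₂.ncard ≤ C.ncard + T.ncard ∧
      (∀ u ∈ W ∪ T, (inBall A u ∩ C₂).Nonempty) ∧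
      (∀ u ∈ W ∪ T, ∀ v ∈ W ∪ T, u ≠ v → inBall A u ∩ C₂ ≠ inBall A v ∩ C₂) := by
  classical
  induction T, hT using Set.Finite.induction_on with
  | empty =>
    exact ⟨C, by simp, by simpa using hdom, by simpa using hsep⟩
  | @insert a T haT hTfin IH =>
    obtain ⟨C₂, hcard, hdom₂, hsep₂⟩ := IH
    obtain ⟨C₃, hcard₃, hdom₃, hsep₃⟩ := step_lemma A hD (W ∪ T) C₂ a hdom₂ hsep₂
    have hset : W ∪ insert a T = insert a (W ∪ T) := Set.union_insert
    refine ⟨C₃, ?_, by rw [hset]; exact hdom₃, by rw [hset]; exact hsep₃⟩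
    calc C₃.ncard ≤ C₂.ncard + 1 := hcard₃
      _ ≤ C.ncard + T.ncard + 1 := by omega
      _ = C.ncard + (insert a T).ncard := by
          rw [Set.ncard_insert_of_notMem haT hTfin]; omega

/-- If `D` is a finite twin-free digraph and `S` a set of vertices such that the induced
subdigraph `D - S` is twin-free, then `γᴵᴰ(D) ≤ γᴵᴰ(D - S) + |S|`. -/
theorem gammaID_le_of_delete {V : Type} [Fintype V] (A : V → V → Prop) (S : Set V)
    (hD : TwinFree A)
    (hDS : TwinFree (fun u v : ↥(Sᶜ) => A u v)) :
    gammaID A ≤ gammaID (fun u v : ↥(Sᶜ) => A u v) + S.ncard := by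
  classical
  set A' : ↥(Sᶜ) → ↥(Sᶜ) → Prop := fun u v => A u v with hA'
  -- the whole vertex set of D - S is an identifying code, so the sInf is attained
  have huniv : IsIdCode A' Set.univ := by
    constructor
    · intro u
      exact ⟨u, Or.inl rfl, trivial⟩
    · intro u v huv heq
      simp only [Set.inter_univ] at heq
      exact hDS u v huv heq
  have hne : {n | ∃ C : Set ↥(Sᶜ), IsIdCode A' C ∧ C.ncard = n}.Nonempty :=
    ⟨(Set.univ : Set ↥(Sᶜ)).ncard, Set.univ, huniv, rfl⟩
  have hmem := Nat.sInf_mem hne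
  obtain ⟨C', hC', hcard'⟩ := hmem
  -- lift C' to V
  set C₀ : Set V := Subtype.val '' C' with hC₀
  have hC₀card : C₀.ncard = gammaID A' := by
    rw [hC₀, Set.ncard_image_of_injective _ Subtype.val_injective]
    exact hcard'
  -- membership transfer for balls
  have hball : ∀ (w u : V) (hw : w ∈ Sᶜ) (hu : u ∈ Sᶜ),
      ((⟨w, hw⟩ : ↥(Sᶜ)) ∈ inBall A' ⟨u, hu⟩ ↔ w ∈ inBall A u) := by
    intro w u hw hu
    simp only [inBall, Set.mem_insert_iff, Set.mem_setOf_eq, Subtype.ext_iff]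
    exact Iff.rfl
  have hmemC₀ : ∀ (w : V) (hw : w ∈ Sᶜ), (w ∈ C₀ ↔ (⟨w, hw⟩ : ↥(Sᶜ)) ∈ C') := by
    intro w hw
    constructor
    · rintro ⟨x, hx, rfl⟩
      convert hx
    · intro h
      exact ⟨⟨w, hw⟩, h, rfl⟩
  -- C₀ dominates and separates Sᶜ in D
  have hdom0 : ∀ u ∈ Sᶜ, (inBall A u ∩ C₀).Nonempty := by
    intro u hu
    obtain ⟨⟨w, hw⟩, hw1, hw2⟩ := hC'.1 ⟨u, hu⟩
    exact ⟨w, (hball w u hw hu).mp hw1, (hmemC₀ w hw).mpr hw2⟩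
  have hsep0 : ∀ u ∈ Sᶜ, ∀ v ∈ Sᶜ, u ≠ v → inBall A u ∩ C₀ ≠ inBall A v ∩ C₀ := by
    intro u hu v hv huv heq
    refine hC'.2 ⟨u, hu⟩ ⟨v, hv⟩ (fun h => huv (congrArg Subtype.val h)) ?_
    ext ⟨w, hw⟩
    have h1 := Set.ext_iff.mp heq w
    simp only [Set.mem_inter_iff] at h1 ⊢
    rw [hball w u hw hu, hball w v hw hv, ← hmemC₀ w hw]
    exact h1
  -- extend over S
  have hSfin : S.Finite := Set.toFinite S
  obtain ⟨C₂, hcard₂, hdom₂, hsep₂⟩ :=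
    extend_lemma A hD Sᶜ C₀ hdom0 hsep0 S hSfin
  have huniv2 : Sᶜ ∪ S = (Set.univ : Set V) := by
    ext x; simp [or_comm]
  rw [huniv2] at hdom₂ hsep₂
  have hid : IsIdCode A C₂ :=
    ⟨fun u => hdom₂ u trivial, fun u v huv => hsep₂ u trivial v trivial huv⟩
  have hle : gammaID A ≤ C₂.ncard := Nat.sInf_le ⟨C₂, hid, rfl⟩
  calc gammaID A ≤ C₂.ncard := hle
    _ ≤ C₀.ncard + S.ncard := hcard₂
    _ = gammaID A' + S.ncard := by rw [hC₀card]
end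

section
/- Every digraph in the class (K₁, ⊕, ⊲⃗) — the closure of the single-vertex digraph under disjoint union and the operation of adding a new source adjacent to all existing vertices — is the transitive closure of a rooted oriented forest. -/
inductive ExtClass : (W : Type) → (W → W → Prop) → Prop
  | single : ExtClass PUnit (fun _ _ => False)
  | union {W₁ W₂ : Type} {A₁ : W₁ → W₁ → Prop} {A₂ : W₂ → W₂ → Prop} :
      ExtClass W₁ A₁ → ExtClass W₂ A₂ →
      ExtClass (W₁ ⊕ W₂) (fun x y =>
        match x, y with
        | .inl a, .inl b => A₁ a b
        | .inr a, .inr b => A₂ a b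
        | _, _ => False)
  | cone {W : Type} {A : W → W → Prop} :
      ExtClass W A →
      ExtClass (Option W) (fun x y =>
        match x, y with
        | some a, some b => A a b
        | none, some _ => True
        | _, none => False)

/-- A digraph `(V, A)` belongs to the class `(K₁, ⊕, ⊲⃗)` if it is isomorphic to a
digraph built from `K₁` by disjoint unions and additions of a universal source. -/
def InExtClass (V : Type) (A : V → V → Prop) : Prop :=
  ∃ (W : Type) (B : W → W → Prop), ExtClass W B ∧
    ∃ e : V ≃ W, ∀ x y : V, A x y ↔ B (e x) (e y)

lemma ExtClass.finite {W : Type} {B : W → W → Prop} (h : ExtClass W B) : Finite W := by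
  induction h with
  | single => infer_instance
  | union h1 h2 ih1 ih2 => haveI := ih1; haveI := ih2; infer_instance
  | @cone W A h ih =>
    haveI := ih
    haveI := Fintype.ofFinite W
    infer_instance

lemma exists_root {W : Type} [Finite W] (F : W → W → Prop)
    (hac : ∀ x, ¬ Relation.TransGen F x x) (x : W) :
    ∃ r, (∀ y, ¬ F y r) ∧ (r = x ∨ Relation.TransGen F r x) := by
  haveI : IsTrans W (Relation.TransGen F) := ⟨fun _ _ _ => Relation.TransGen.trans⟩
  haveI : IsIrrefl W (Relation.TransGen F) := ⟨hac⟩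
  have hwf := Finite.wellFounded_of_trans_of_irrefl (Relation.TransGen F)
  refine hwf.induction (C := fun x => ∃ r, (∀ y, ¬ F y r) ∧ (r = x ∨ Relation.TransGen F r x))
    x ?_
  clear x
  intro x ih
  by_cases hx : ∃ y, F y x
  · obtain ⟨y, hy⟩ := hx
    obtain ⟨r, hr, hry⟩ := ih y (.single hy)
    refine ⟨r, hr, Or.inr ?_⟩
    cases hry with
    | inl h => subst h; exact .single hy
    | inr h => exact h.tail hy
  · exact ⟨x, fun y hy => hx ⟨y, hy⟩, Or.inl rfl⟩

lemma extClass_key {W : Type} {B : W → W → Prop} (h : ExtClass W B) :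
    ∃ F : W → W → Prop,
      (∀ x y z : W, F x z → F y z → x = y) ∧
      (∀ x : W, ¬ Relation.TransGen F x x) ∧
      (∀ x y : W, B x y ↔ Relation.TransGen F x y) := by
  induction h with
  | single =>
    refine ⟨fun _ _ => False, fun _ _ _ h => h.elim, ?_, ?_⟩
    · intro x hx
      induction hx with
      | single h => exact h
      | tail _ h _ => exact h
    · intro x y
      constructor
      · intro h; exact h.elim
      · intro h
        induction h with
        | single h => exact h
        | tail _ h _ => exact h
  | @union W₁ W₂ A₁ A₂ h1 h2 ih1 ih2 =>
    obtain ⟨F₁, hu₁, hac₁, hc₁⟩ := ih1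
    obtain ⟨F₂, hu₂, hac₂, hc₂⟩ := ih2
    set F : W₁ ⊕ W₂ → W₁ ⊕ W₂ → Prop := fun x y =>
      match x, y with
      | .inl a, .inl b => F₁ a b
      | .inr a, .inr b => F₂ a b
      | _, _ => False with hF
    have hsubl : ∀ (a : W₁) (y : W₁ ⊕ W₂), Relation.TransGen F (.inl a) y →
        ∃ b, y = Sum.inl b ∧ Relation.TransGen F₁ a b := by
      intro a y h
      induction h with
      | @single c h =>
        cases c with
        | inl b => exact ⟨b, rfl, Relation.TransGen.single h⟩
        | inr b => exact False.elim h
      | @tail b c hp hs ih =>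
        obtain ⟨b', rfl, hb⟩ := ih
        cases c with
        | inl c' => exact ⟨c', rfl, hb.tail hs⟩
        | inr c' => exact False.elim hs
    have hsubr : ∀ (a : W₂) (y : W₁ ⊕ W₂), Relation.TransGen F (.inr a) y →
        ∃ b, y = Sum.inr b ∧ Relation.TransGen F₂ a b := by
      intro a y h
      induction h with
      | @single c h =>
        cases c with
        | inl b => exact False.elim h
        | inr b => exact ⟨b, rfl, Relation.TransGen.single h⟩
      | @tail b c hp hs ih =>
        obtain ⟨b', rfl, hb⟩ := ih
        cases c with
        | inl c' => exact False.elim hs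
        | inr c' => exact ⟨c', rfl, hb.tail hs⟩
    refine ⟨F, ?_, ?_, ?_⟩
    · intro x y z hx hy
      cases x with
      | inl a =>
        cases y with
        | inl a' =>
          cases z with
          | inl b => exact congrArg Sum.inl (hu₁ _ _ _ hx hy)
          | inr b => exact False.elim hx
        | inr a' =>
          cases z with
          | inl b => exact False.elim hy
          | inr b => exact False.elim hx
      | inr a =>
        cases y with
        | inl a' =>
          cases z with
          | inl b => exact False.elim hx
          | inr b => exact False.elim hy
        | inr a' =>
          cases z with
          | inl b => exact False.elim hx
          | inr b => exact congrArg Sum.inr (hu₂ _ _ _ hx hy)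
    · intro x hx
      cases x with
      | inl a =>
        obtain ⟨b, hb, htg⟩ := hsubl a _ hx
        cases Sum.inl.inj hb
        exact hac₁ a htg
      | inr a =>
        obtain ⟨b, hb, htg⟩ := hsubr a _ hx
        cases Sum.inr.inj hb
        exact hac₂ a htg
    · intro x y
      cases x with
      | inl a =>
        cases y with
        | inl b =>
          constructor
          · intro hxy
            exact ((hc₁ a b).mp hxy).lift Sum.inl (fun _ _ h => h)
          · intro hxy
            obtain ⟨b', hb, htg⟩ := hsubl a _ hxy
            cases Sum.inl.inj hb
            exact (hc₁ a b).mpr htg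
        | inr b =>
          constructor
          · intro hxy; exact False.elim hxy
          · intro hxy
            obtain ⟨b', hb, _⟩ := hsubl a _ hxy
            exact False.elim (by cases hb)
      | inr a =>
        cases y with
        | inl b =>
          constructor
          · intro hxy; exact False.elim hxy
          · intro hxy
            obtain ⟨b', hb, _⟩ := hsubr a _ hxy
            exact False.elim (by cases hb)
        | inr b =>
          constructor
          · intro hxy
            exact ((hc₂ a b).mp hxy).lift Sum.inr (fun _ _ h => h)
          · intro hxy
            obtain ⟨b', hb, htg⟩ := hsubr a _ hxy
            cases Sum.inr.inj hb
            exact (hc₂ a b).mpr htg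
  | @cone W A h ih =>
    haveI : Finite W := h.finite
    obtain ⟨F, hu, hac, hc⟩ := ih
    set F' : Option W → Option W → Prop := fun x y =>
      match x, y with
      | some a, some b => F a b
      | none, some b => ∀ z, ¬ F z b
      | _, none => False with hF'
    have hnone : ∀ (x : Option W), ¬ Relation.TransGen F' x none := by
      have : ∀ (x y : Option W), Relation.TransGen F' x y → y ≠ none := by
        intro x y h
        induction h with
        | @single c h =>
          cases c with
          | none => cases x <;> exact False.elim h
          | some b => exact Option.some_ne_none b
        | @tail b c hp hs ih =>
          cases c with
          | none => cases b <;> exact False.elim hs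
          | some c' => exact Option.some_ne_none c'
      intro x hx
      exact this x none hx rfl
    have hsubs : ∀ (a : W) (y : Option W), Relation.TransGen F' (some a) y →
        ∃ b, y = some b ∧ Relation.TransGen F a b := by
      intro a y h
      induction h with
      | @single c h =>
        cases c with
        | none => exact False.elim h
        | some b => exact ⟨b, rfl, Relation.TransGen.single h⟩
      | @tail b c hp hs ih =>
        obtain ⟨b', rfl, hb⟩ := ih
        cases c with
        | none => exact False.elim hs
        | some c' => exact ⟨c', rfl, hb.tail hs⟩
    have hall : ∀ b : W, Relation.TransGen F' none (some b) := by
      intro b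
      obtain ⟨r, hr, hrb⟩ := exists_root F hac b
      have hstep : F' none (some r) := hr
      cases hrb with
      | inl h => subst h; exact .single hstep
      | inr h => exact (h.lift some (fun _ _ hh => hh)).head hstep
    refine ⟨F', ?_, ?_, ?_⟩
    · intro x y z hx hy
      cases x with
      | none =>
        cases y with
        | none => rfl
        | some b =>
          cases z with
          | none => exact False.elim hy
          | some c => exact False.elim (hx b hy)
      | some a =>
        cases y with
        | none =>
          cases z with
          | none => exact False.elim hx
          | some c => exact False.elim (hy a hx)
        | some b =>
          cases z with
          | none => exact False.elim hx
          | some c => exact congrArg some (hu a b c hx hy)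
    · intro x hx
      cases x with
      | none => exact hnone none hx
      | some a =>
        obtain ⟨b, hb, htg⟩ := hsubs a _ hx
        cases Option.some.inj hb
        exact hac a htg
    · intro x y
      cases x with
      | none =>
        cases y with
        | none =>
          constructor
          · intro hxy; exact False.elim hxy
          · intro hxy; exact False.elim (hnone none hxy)
        | some b =>
          constructor
          · intro _; exact hall b
          · intro _; exact trivial
      | some a =>
        cases y with
        | none =>
          constructor
          · intro hxy; exact False.elim hxy
          · intro hxy; exact False.elim (hnone (some a) hxy)
        | some b =>
          constructor
          · intro hxy
            exact ((hc a b).mp hxy).lift some (fun _ _ hh => hh)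
          · intro hxy
            obtain ⟨b', hb, htg⟩ := hsubs a _ hxy
            cases Option.some.inj hb
            exact (hc a b).mpr htg

lemma transGen_equiv {V W : Type} (e : V ≃ W) (F : W → W → Prop) (x y : V) :
    Relation.TransGen (fun a b => F (e a) (e b)) x y ↔ Relation.TransGen F (e x) (e y) := by
  constructor
  · intro h
    induction h with
    | single h => exact .single h
    | tail _ h ih => exact ih.tail h
  · intro h
    have key : ∀ w, Relation.TransGen F (e x) w → ∀ y, w = e y →
        Relation.TransGen (fun a b => F (e a) (e b)) x y := by
      intro w hw
      induction hw with
      | single h => intro y hy; subst hy; exact .single h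
      | @tail b c hp h ih =>
        intro y hy; subst hy
        have hb : b = e (e.symm b) := by simp
        refine (ih (e.symm b) hb).tail ?_
        rw [← hb]; exact h
    exact key _ h y rfl

/-- Every digraph in the class `(K₁, ⊕, ⊲⃗)` is the transitive closure of a rooted
oriented forest: a relation `F` in which every vertex has at most one `F`-in-neighbour
and which has no directed cycles. -/
theorem extClass_transClosure_forest {V : Type} [Fintype V] (A : V → V → Prop)
    (h : InExtClass V A) :
    ∃ F : V → V → Prop,
      (∀ x y z : V, F x z → F y z → x = y) ∧
      (∀ x : V, ¬ Relation.TransGen F x x) ∧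
      (∀ x y : V, A x y ↔ Relation.TransGen F x y) := by
  obtain ⟨W, B, hB, e, he⟩ := h
  obtain ⟨F, hu, hac, hc⟩ := extClass_key hB
  refine ⟨fun x y => F (e x) (e y), ?_, ?_, ?_⟩
  · intro x y z hx hy
    exact e.injective (hu _ _ _ hx hy)
  · intro x hx
    exact hac (e x) ((transGen_equiv e F x x).mp hx)
  · intro x y
    rw [he, hc, transGen_equiv]
end

section
/- For every digraph D in the class (K₁, ⊕, ⊲⃗), the only identifying code of D is the whole vertex set; that is, the minimum identifying code has size |V(D)|. -/
def BForced {V : Type} (A : V → V → Prop) : Prop :=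
  ∀ v : V, inBall A v = {v} ∨ ∃ u, u ≠ v ∧ inBall A u \ {v} = inBall A v \ {v}

lemma mem_inBall {V : Type} (A : V → V → Prop) (w x : V) :
    w ∈ inBall A x ↔ w = x ∨ A w x := by
  simp [inBall]

lemma extClass_bforced {W : Type} {B : W → W → Prop} (h : ExtClass W B) : BForced B := by
  induction h with
  | single =>
      intro v
      left
      ext w
      simp [mem_inBall]
  | union h1 h2 ih1 ih2 =>
      rintro (a | a)
      · rcases ih1 a with hb | ⟨u, hu, heq⟩
        · left
          ext (w | w) <;> simp only [mem_inBall, Set.mem_singleton_iff]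
          · constructor
            · rintro (h | h)
              · exact h
              · have : w ∈ inBall _ a := (mem_inBall _ w a).2 (Or.inr h)
                rw [hb] at this; simpa using this
            · intro h; exact Or.inl h
          · simp
        · right
          refine ⟨.inl u, by simpa using hu, ?_⟩
          ext (w | w) <;>
            simp only [Set.mem_diff, mem_inBall, Set.mem_singleton_iff]
          · have := Set.ext_iff.1 heq w
            simp only [Set.mem_diff, mem_inBall, Set.mem_singleton_iff] at this
            constructor
            · rintro ⟨h1, h2⟩
              have h2' : w ≠ a := by simpa using h2
              have := this.1 ⟨by simpa using h1, h2'⟩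
              exact ⟨by simpa using this.1, by simpa using this.2⟩
            · rintro ⟨h1, h2⟩
              have h2' : w ≠ a := by simpa using h2
              have := this.2 ⟨by simpa using h1, h2'⟩
              exact ⟨by simpa using this.1, by simpa using this.2⟩
          · simp
      · rcases ih2 a with hb | ⟨u, hu, heq⟩
        · left
          ext (w | w) <;> simp only [mem_inBall, Set.mem_singleton_iff]
          · simp
          · constructor
            · rintro (h | h)
              · exact h
              · have : w ∈ inBall _ a := (mem_inBall _ w a).2 (Or.inr h)
                rw [hb] at this; simpa using this
            · intro h; exact Or.inl h
        · right
          refine ⟨.inr u, by simpa using hu, ?_⟩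
          ext (w | w) <;>
            simp only [Set.mem_diff, mem_inBall, Set.mem_singleton_iff]
          · simp
          · have := Set.ext_iff.1 heq w
            simp only [Set.mem_diff, mem_inBall, Set.mem_singleton_iff] at this
            constructor
            · rintro ⟨h1, h2⟩
              have h2' : w ≠ a := by simpa using h2
              have := this.1 ⟨by simpa using h1, h2'⟩
              exact ⟨by simpa using this.1, by simpa using this.2⟩
            · rintro ⟨h1, h2⟩
              have h2' : w ≠ a := by simpa using h2
              have := this.2 ⟨by simpa using h1, h2'⟩
              exact ⟨by simpa using this.1, by simpa using this.2⟩
  | cone h ih =>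
      rintro (_ | a)
      · left
        ext (w | w) <;> simp [mem_inBall]
      · right
        rcases ih a with hb | ⟨u, hu, heq⟩
        · refine ⟨none, by simp, ?_⟩
          ext (w | w) <;>
            simp only [Set.mem_diff, mem_inBall, Set.mem_singleton_iff]
          · simp
          · constructor
            · rintro ⟨h1, _⟩; exact absurd h1 (by simp)
            · rintro ⟨h1, h2⟩
              exfalso
              have hmem := Set.ext_iff.1 hb w
              rw [mem_inBall, Set.mem_singleton_iff] at hmem
              rcases h1 with h1 | h1
              · exact h2 h1
              · exact h2 (by rw [hmem.1 (Or.inr h1)])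
        · refine ⟨some u, by simpa using hu, ?_⟩
          ext (w | w) <;>
            simp only [Set.mem_diff, mem_inBall, Set.mem_singleton_iff]
          · simp
          · have := Set.ext_iff.1 heq w
            simp only [Set.mem_diff, mem_inBall, Set.mem_singleton_iff] at this
            constructor
            · rintro ⟨h1, h2⟩
              have h2' : w ≠ a := by simpa using h2
              have := this.1 ⟨by simpa using h1, h2'⟩
              exact ⟨by simpa using this.1, by simpa using this.2⟩
            · rintro ⟨h1, h2⟩
              have h2' : w ≠ a := by simpa using h2
              have := this.2 ⟨by simpa using h1, h2'⟩
              exact ⟨by simpa using this.1, by simpa using this.2⟩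

lemma inExtClass_bforced {V : Type} (A : V → V → Prop) (h : InExtClass V A) :
    BForced A := by
  obtain ⟨W, B, hB, e, he⟩ := h
  have hbf := extClass_bforced hB
  intro v
  have key : ∀ w x : V, w ∈ inBall A x ↔ e w ∈ inBall B (e x) := by
    intro w x
    rw [mem_inBall, mem_inBall, he]
    constructor
    · rintro (rfl | h); exacts [Or.inl rfl, Or.inr h]
    · rintro (h | h); exacts [Or.inl (e.injective h), Or.inr h]
  rcases hbf (e v) with hb | ⟨u, hu, heq⟩
  · left
    ext w
    rw [Set.mem_singleton_iff, key, hb, Set.mem_singleton_iff, e.apply_eq_iff_eq]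
  · right
    refine ⟨e.symm u, fun hc => hu (by simpa using congrArg e hc), ?_⟩
    ext w
    have := Set.ext_iff.1 heq (e w)
    simp only [Set.mem_diff, Set.mem_singleton_iff] at this ⊢
    rw [key, key, Equiv.apply_symm_apply]
    constructor
    · rintro ⟨h1, h2⟩
      have := this.1 ⟨h1, fun hc => h2 (e.injective hc)⟩
      exact ⟨this.1, fun hc => this.2 (by rw [hc])⟩
    · rintro ⟨h1, h2⟩
      have := this.2 ⟨h1, fun hc => h2 (e.injective hc)⟩
      exact ⟨this.1, fun hc => this.2 (by rw [hc])⟩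

/-- For every digraph in the class `(K₁, ⊕, ⊲⃗)`, the only identifying code is the whole
vertex set; in particular the minimum identifying code has size `|V(D)|`. -/
theorem extClass_only_idCode_univ {V : Type} [Fintype V] (A : V → V → Prop)
    (h : InExtClass V A) :
    ∀ C : Set V, IsIdCode A C → C = Set.univ := by
  intro C hC
  have hbf := inExtClass_bforced A h
  ext v
  simp only [Set.mem_univ, iff_true]
  by_contra hv
  rcases hbf v with hb | ⟨u, hu, heq⟩
  · obtain ⟨x, hx1, hx2⟩ := hC.1 v
    rw [hb] at hx1
    exact hv (hx1 ▸ hx2)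
  · apply hC.2 u v hu
    ext w
    simp only [Set.mem_inter_iff]
    constructor
    · rintro ⟨h1, h2⟩
      have hw : w ≠ v := fun hc => hv (hc ▸ h2)
      have := (Set.ext_iff.1 heq w).1 ⟨h1, hw⟩
      exact ⟨this.1, h2⟩
    · rintro ⟨h1, h2⟩
      have hw : w ≠ v := fun hc => hv (hc ▸ h2)
      have := (Set.ext_iff.1 heq w).2 ⟨h1, hw⟩
      exact ⟨this.1, h2⟩
end

section
/- Let D be a digraph in the class (K₁, ⊕, ⊲⃗), which is the transitive closure of a rooted oriented forest F. For any vertex x: if x is a source (a root of F), then V(D) \ {x} is a separating code of D; otherwise, x and its father in F are the unique pair of distinct vertices not separated by V(D) \ {x}. -/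
/-- Let `D ∈ (K₁, ⊕, ⊲⃗)` be the transitive closure of the rooted oriented forest `F`.
For any vertex `x`: if `x` is a source then `V(D) - x` is a separating code; otherwise
`x` and its father in `F` are the unique pair of distinct vertices not separated by
`V(D) - x`. -/
theorem extClass_sep_minus_vertex {V : Type} [Fintype V] (A F : V → V → Prop)
    (hcls : InExtClass V A)
    (hF1 : ∀ x y z : V, F x z → F y z → x = y)
    (hF2 : ∀ x : V, ¬ Relation.TransGen F x x)
    (hF3 : ∀ x y : V, A x y ↔ Relation.TransGen F x y)
    (x : V) :
    ((∀ w : V, ¬ A w x) → IsSepCode A ({x}ᶜ : Set V)) ∧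
    ((∃ w : V, A w x) → ∃ f : V, F f x ∧
      ∀ u v : V, u ≠ v →
        (inBall A u ∩ ({x}ᶜ : Set V) = inBall A v ∩ ({x}ᶜ : Set V) ↔
          (u = x ∧ v = f) ∨ (u = f ∧ v = x))) := by
  have hAirr : ∀ u : V, ¬ A u u := fun u h => hF2 u ((hF3 u u).mp h)
  have hAtrans : ∀ a b c : V, A a b → A b c → A a c := fun a b c h1 h2 =>
    (hF3 a c).mpr (((hF3 a b).mp h1).trans ((hF3 b c).mp h2))
  have hmemself : ∀ u : V, u ∈ inBall A u := fun u => Set.mem_insert _ _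
  have key : ∀ u v : V, u ≠ x → v ≠ x →
      inBall A u ∩ ({x}ᶜ : Set V) = inBall A v ∩ ({x}ᶜ : Set V) → u = v := by
    intro u v hu hv h
    have hu' : u ∈ inBall A v := by
      have h1 : u ∈ inBall A u ∩ ({x}ᶜ : Set V) := ⟨hmemself u, hu⟩
      rw [h] at h1; exact h1.1
    have hv' : v ∈ inBall A u := by
      have h1 : v ∈ inBall A v ∩ ({x}ᶜ : Set V) := ⟨hmemself v, hv⟩
      rw [← h] at h1; exact h1.1
    rcases Set.mem_insert_iff.mp hu' with rfl | hu'
    · rfl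
    rcases Set.mem_insert_iff.mp hv' with rfl | hv'
    · rfl
    exact absurd (hAtrans u v u hu' hv') (hAirr u)
  constructor
  · intro hsrc u v huv h
    by_cases hux : u = x
    · have hvx : v ≠ x := fun hvx => huv (hux.trans hvx.symm)
      have h1 : v ∈ inBall A v ∩ ({x}ᶜ : Set V) := ⟨hmemself v, hvx⟩
      rw [← h] at h1
      rcases Set.mem_insert_iff.mp h1.1 with heq | hv'
      · exact huv heq.symm
      · exact hsrc v (hux ▸ hv')
    by_cases hvx : v = x
    · have h1 : u ∈ inBall A u ∩ ({x}ᶜ : Set V) := ⟨hmemself u, hux⟩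
      rw [h] at h1
      rcases Set.mem_insert_iff.mp h1.1 with heq | hu'
      · exact huv heq
      · exact hsrc u (hvx ▸ hu')
    · exact huv (key u v hux hvx h)
  · rintro ⟨w, hw⟩
    obtain ⟨f, hf⟩ : ∃ f : V, F f x := by
      cases (hF3 w x).mp hw with
      | single h => exact ⟨w, h⟩
      | tail _ h => exact ⟨_, h⟩
    have hfx : f ≠ x := by
      intro h; rw [h] at hf; exact hF2 x (Relation.TransGen.single hf)
    have hAfx : A f x := (hF3 f x).mpr (Relation.TransGen.single hf)
    have anc : ∀ v : V, A v x → v = f ∨ A v f := by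
      intro v hv
      cases (hF3 v x).mp hv with
      | single h => exact Or.inl (hF1 v f x h hf)
      | tail h1 h2 =>
        have hc := hF1 _ f x h2 hf
        exact Or.inr ((hF3 v f).mpr (hc ▸ h1))
    have Ex : inBall A x ∩ ({x}ᶜ : Set V) = inBall A f ∩ ({x}ᶜ : Set V) := by
      ext w
      simp only [inBall, Set.mem_inter_iff, Set.mem_insert_iff, Set.mem_setOf_eq,
        Set.mem_compl_iff, Set.mem_singleton_iff]
      constructor
      · rintro ⟨hw1, hw2⟩
        have hwx : A w x := by
          rcases hw1 with rfl | h
          · exact absurd rfl hw2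
          · exact h
        rcases anc w hwx with rfl | h
        · exact ⟨Or.inl rfl, hw2⟩
        · exact ⟨Or.inr h, hw2⟩
      · rintro ⟨hw1, hw2⟩
        rcases hw1 with rfl | h
        · exact ⟨Or.inr hAfx, hw2⟩
        · exact ⟨Or.inr (hAtrans w f x h hAfx), hw2⟩
    refine ⟨f, hf, fun u v huv => ⟨fun h => ?_, fun h => ?_⟩⟩
    · by_cases hux : u = x
      · have hvx : v ≠ x := fun hvx => huv (hux.trans hvx.symm)
        exact Or.inl ⟨hux, key v f hvx hfx (by rw [← h, hux, Ex])⟩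
      by_cases hvx : v = x
      · exact Or.inr ⟨key u f hux hfx (by rw [h, hvx, Ex]), hvx⟩
      · exact absurd (key u v hux hvx h) huv
    · rcases h with ⟨rfl, rfl⟩ | ⟨rfl, rfl⟩
      · exact Ex
      · exact Ex.symm
end

section
/- Let D be a finite twin-free digraph containing at least one pair of symmetric arcs (both u→v and v→u for some u ≠ v). Then D admits an identifying code of size at most |V(D)| - 1. -/
lemma mem_inBall_self {V : Type} (A : V → V → Prop) (x : V) : x ∈ inBall A x :=
  Set.mem_insert _ _

lemma mem_inBall_of_arc {V : Type} {A : V → V → Prop} {x y : V} (h : A x y) :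
    x ∈ inBall A y := Set.mem_insert_iff.2 (Or.inr h)

lemma arc_of_mem_inBall {V : Type} {A : V → V → Prop} {x y : V}
    (h : x ∈ inBall A y) (hne : x ≠ y) : A x y := by
  rcases h with h | h
  · exact absurd h hne
  · exact h

/-- Key combinatorial lemma: if every set `{w}ᶜ` fails to be an identifying code,
then there are no symmetric arcs. -/
lemma no_sym_of_all_fail {V : Type} [Fintype V] (A : V → V → Prop) (htf : TwinFree A)
    (hfail : ∀ w : V, ¬ IsIdCode A ({w}ᶜ)) :
    ¬ ∃ u v : V, u ≠ v ∧ A u v ∧ A v u := by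
  classical
  rintro ⟨u0, v0, huv0, hA0, hA0'⟩
  haveI : Nonempty V := ⟨u0⟩
  set B : V → Set V := fun x => inBall A x with hB
  have hBinj : ∀ {p q : V}, B p = B q → p = q := by
    intro p q h
    by_contra hne
    exact htf p q hne h
  -- Step 1: extract tails
  have ht : ∀ w : V, ∃ T : Set V, w ∉ T ∧ (T = ∅ ∨ ∃ y, T = B y) ∧ ∃ x, insert w T = B x := by
    intro w
    rcases not_and_or.mp (hfail w) with h1 | h2
    · push_neg at h1
      obtain ⟨u, hu⟩ := h1
      have hsub : B u ⊆ {w} := by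
        intro q hq
        by_contra hqw
        exact Set.eq_empty_iff_forall_notMem.1 hu q ⟨hq, hqw⟩
      have huw : u = w := hsub (mem_inBall_self A u)
      have hBw : B w = {w} := by
        apply Set.Subset.antisymm (huw ▸ hsub)
        intro q hq
        rcases hq with rfl
        exact huw ▸ mem_inBall_self A u
      exact ⟨∅, by simp, Or.inl rfl, ⟨w, by simp [hBw]⟩⟩
    · unfold IsSepCode at h2
      push_neg at h2
      obtain ⟨u, v, huv, heq⟩ := h2
      have hdiff : B u \ {w} = B v \ {w} := by
        have h1 : B u ∩ {w}ᶜ = B u \ {w} := rfl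
        have h2' : B v ∩ {w}ᶜ = B v \ {w} := rfl
        rw [← h1, ← h2', heq]
      have hBne : B u ≠ B v := htf u v huv
      by_cases hwu : w ∈ B u
      · by_cases hwv : w ∈ B v
        · exfalso
          apply hBne
          have : B u = insert w (B u \ {w}) := by
            rw [Set.insert_diff_singleton, Set.insert_eq_self.2 hwu]
          rw [this, hdiff, Set.insert_diff_singleton, Set.insert_eq_self.2 hwv]
        · refine ⟨B v, hwv, Or.inr ⟨v, rfl⟩, ⟨u, ?_⟩⟩
          have hv : B v \ {w} = B v := Set.diff_singleton_eq_self hwv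
          rw [← hv, ← hdiff, Set.insert_diff_singleton, Set.insert_eq_self.2 hwu]
      · by_cases hwv : w ∈ B v
        · refine ⟨B u, hwu, Or.inr ⟨u, rfl⟩, ⟨v, ?_⟩⟩
          have hu : B u \ {w} = B u := Set.diff_singleton_eq_self hwu
          rw [← hu, hdiff, Set.insert_diff_singleton, Set.insert_eq_self.2 hwv]
        · exfalso
          apply hBne
          rw [← Set.diff_singleton_eq_self hwu, hdiff, Set.diff_singleton_eq_self hwv]
  choose t htw httail hthead using ht
  choose h hh using hthead
  have hk : ∀ w : V, ∃ y : V, t w = ∅ ∨ t w = B y := by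
    intro w
    rcases httail w with h0 | ⟨y, hy⟩
    · exact ⟨u0, Or.inl h0⟩
    · exact ⟨y, Or.inr hy⟩
  choose k hk using hk
  -- Step 2: linear algebra over ZMod 2
  set ind : Set V → (V → ZMod 2) := fun S q => if q ∈ S then 1 else 0 with hind
  set b : V → (V → ZMod 2) := fun x => ind (B x) with hb
  have ind_empty : ind ∅ = 0 := by funext q; simp [hind]
  have hps : ∀ w q : V, (Pi.single w 1 : V → ZMod 2) q = if q = w then (1 : ZMod 2) else 0 := by
    intro w q
    by_cases h' : q = w
    · subst h'; rw [Pi.single_eq_same, if_pos rfl]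
    · rw [Pi.single_eq_of_ne h', if_neg h']
  have ew : ∀ w : V, ind (insert w (t w)) - ind (t w) = Pi.single w 1 := by
    intro w
    funext q
    simp only [hind, Pi.sub_apply]
    by_cases hq : q = w
    · subst hq
      rw [if_pos (Set.mem_insert _ _), if_neg (htw q), Pi.single_eq_same, sub_zero]
    · rw [Pi.single_eq_of_ne hq]
      by_cases hq2 : q ∈ t w
      · rw [if_pos (Set.mem_insert_of_mem _ hq2), if_pos hq2, sub_self]
      · have hnot : q ∉ insert w (t w) := by
          intro h'
          rcases Set.mem_insert_iff.mp h' with h' | h'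
          · exact hq h'
          · exact hq2 h'
        rw [if_neg hnot, if_neg hq2, sub_self]
  have hsingle_mem : ∀ w : V, Pi.single w (1 : ZMod 2) ∈
      Submodule.span (ZMod 2) (Set.range b) := by
    intro w
    rw [← ew w]
    apply sub_mem
    · rw [hh w]
      exact Submodule.subset_span ⟨h w, rfl⟩
    · rcases hk w with h0 | hy
      · rw [h0, ind_empty]; exact zero_mem _
      · rw [hy]
        exact Submodule.subset_span ⟨k w, rfl⟩
  have hspan : ⊤ ≤ Submodule.span (ZMod 2) (Set.range b) := by
    intro f _
    have hf : f = ∑ w : V, f w • Pi.single w (1 : ZMod 2) := by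
      have h1 : ∀ w : V, f w • Pi.single w (1 : ZMod 2) = (Pi.single w (f w) : V → ZMod 2) := by
        intro w
        funext q
        rw [Pi.smul_apply, hps w q]
        by_cases h' : q = w
        · subst h'
          rw [if_pos rfl, Pi.single_eq_same, smul_eq_mul, mul_one]
        · rw [if_neg h', Pi.single_eq_of_ne h', smul_eq_mul, mul_zero]
      rw [Finset.sum_congr rfl fun w _ => h1 w, Finset.univ_sum_single]
    rw [hf]
    exact Submodule.sum_mem _ fun w _ => Submodule.smul_mem _ _ (hsingle_mem w)
  have hcard : Fintype.card V = Module.finrank (ZMod 2) (V → ZMod 2) :=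
    (Module.finrank_pi (ZMod 2)).symm
  have hindep : LinearIndependent (ZMod 2) b :=
    linearIndependent_of_top_le_span_of_card_eq_finrank hspan hcard
  -- Step 3: parent lemma
  have hparent : ∀ z : V, ∃ w ∈ B z, insert w (t w) = B z := by
    intro z
    set s : Finset V := Finset.univ.filter (fun w => w ∈ B z) with hs
    have hsum : ∑ w ∈ s, Pi.single w (1 : ZMod 2) = ind (B z) := by
      funext q
      rw [Finset.sum_apply]
      rw [Finset.sum_congr rfl fun w _ => hps w q]
      rw [Finset.sum_ite_eq s q (fun _ => (1 : ZMod 2))]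
      have : (q ∈ s) = (q ∈ B z) := by
        simp [hs]
      simp only [hind, this]
    -- the coefficient function
    set g : V → ZMod 2 := fun x =>
      (∑ w ∈ s, ((if h w = x then (1 : ZMod 2) else 0) -
        (if t w ≠ ∅ ∧ k w = x then (1 : ZMod 2) else 0))) - (if z = x then 1 else 0) with hg
    have hgsum : ∑ x : V, g x • b x = 0 := by
      have e1 : ∀ x : V, g x • b x =
          (∑ w ∈ s, ((if h w = x then (1 : ZMod 2) else 0) • b x -
            (if t w ≠ ∅ ∧ k w = x then (1 : ZMod 2) else 0) • b x)) -
          (if z = x then (1 : ZMod 2) else 0) • b x := by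
        intro x
        simp only [hg]
        rw [sub_smul, Finset.sum_smul]
        rw [Finset.sum_congr rfl fun w _ => sub_smul _ _ (b x)]
      rw [Finset.sum_congr rfl fun x _ => e1 x]
      rw [Finset.sum_sub_distrib]
      rw [Finset.sum_comm]
      have e2 : ∀ w ∈ s, (∑ x : V, ((if h w = x then (1 : ZMod 2) else 0) • b x -
          (if t w ≠ ∅ ∧ k w = x then (1 : ZMod 2) else 0) • b x)) =
          b (h w) - ind (t w) := by
        intro w _
        rw [Finset.sum_sub_distrib]
        congr 1
        · simp only [ite_smul, one_smul, zero_smul]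
          exact Fintype.sum_ite_eq (h w) b
        · by_cases h0 : t w = ∅
          · rw [h0, ind_empty]
            apply Finset.sum_eq_zero
            intro x _
            rw [if_neg (by tauto), zero_smul]
          · have hy : t w = B (k w) := (hk w).resolve_left h0
            have e5 : ∀ x : V, (if t w ≠ ∅ ∧ k w = x then (1 : ZMod 2) else 0) • b x =
                if k w = x then b x else 0 := by
              intro x
              by_cases hx : k w = x
              · rw [if_pos ⟨h0, hx⟩, one_smul, if_pos hx]
              · rw [if_neg (by tauto), zero_smul, if_neg hx]
            rw [Finset.sum_congr rfl fun x _ => e5 x]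
            rw [Fintype.sum_ite_eq (k w) b]
            simp [hy, hb]
      rw [Finset.sum_congr rfl e2]
      have e3 : ∀ w ∈ s, b (h w) - ind (t w) = Pi.single w (1 : ZMod 2) := by
        intro w _
        have : b (h w) = ind (insert w (t w)) := by
          simp only [hb]
          rw [← hh w]
        rw [this]
        exact ew w
      rw [Finset.sum_congr rfl e3, hsum]
      have e4 : (∑ x : V, (if z = x then (1 : ZMod 2) else 0) • b x) = ind (B z) := by
        simp only [ite_smul, one_smul, zero_smul]
        rw [Fintype.sum_ite_eq z b]
      rw [e4, sub_self]
    have hg0 : g z = 0 := Fintype.linearIndependent_iff.1 hindep g hgsum z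
    simp only [hg] at hg0
    have hc2 : ∀ w ∈ s, (if t w ≠ ∅ ∧ k w = z then (1 : ZMod 2) else 0) = 0 := by
      intro w hw
      rw [if_neg]
      rintro ⟨h0, hkz⟩
      have hy : t w = B (k w) := (hk w).resolve_left h0
      apply htw w
      rw [hy, hkz]
      exact (Finset.mem_filter.1 hw).2
    rw [Finset.sum_congr rfl (fun w hw => by rw [hc2 w hw, sub_zero]), if_pos trivial] at hg0
    have hsum1 : (∑ w ∈ s, (if h w = z then (1 : ZMod 2) else 0)) = 1 :=
      sub_eq_zero.mp hg0
    have hex : ∃ w ∈ s, (if h w = z then (1 : ZMod 2) else 0) ≠ 0 := by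
      by_contra hcon
      push_neg at hcon
      rw [Finset.sum_eq_zero hcon] at hsum1
      exact one_ne_zero hsum1.symm
    obtain ⟨w, hw, hwne⟩ := hex
    have hwz : h w = z := by
      by_contra hne
      rw [if_neg hne] at hwne
      exact hwne rfl
    exact ⟨w, (Finset.mem_filter.1 hw).2, by rw [hh w, hwz]⟩
  -- Step 4: K3, heads of canonical edges sit inside every ball containing the label
  have hfin : ∀ S : Set V, S.Finite := fun S => S.toFinite
  have hK3 : ∀ (n : ℕ) (z a : V), (B z).ncard = n → a ∈ B z → insert a (t a) ⊆ B z := by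
    intro n
    induction n using Nat.strong_induction_on with
    | _ n IH =>
      intro z a hcard ha
      obtain ⟨w, hwz, hwe⟩ := hparent z
      by_cases haw : a = w
      · subst haw; rw [hwe]
      · have hat : a ∈ t w := by
          have : a ∈ insert w (t w) := hwe ▸ ha
          rcases this with h' | h'
          · exact absurd h' haw
          · exact h'
        have h0 : t w ≠ ∅ := fun h' => by rw [h'] at hat; exact hat
        have hy : t w = B (k w) := (hk w).resolve_left h0
        have hss : t w ⊂ B z := by
          constructor
          · rw [← hwe]; exact Set.subset_insert _ _
          · intro hsub
            exact htw w (hsub hwz)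
        have hlt : (B (k w)).ncard < n := by
          rw [← hy, ← hcard]
          exact Set.ncard_lt_ncard hss (hfin _)
        have := IH _ hlt (k w) a rfl (hy ▸ hat)
        intro q hq
        exact hss.1 (hy ▸ this hq)
  have hK3' : ∀ (z a : V), a ∈ B z → insert a (t a) ⊆ B z := fun z a ha =>
    hK3 (B z).ncard z a rfl ha
  -- Step 5: descent on symmetric pairs
  have hdesc : ∀ (m : ℕ) (a c : V), a ≠ c → A a c → A c a →
      (B a).ncard + (B c).ncard = m → False := by
    intro m
    induction m using Nat.strong_induction_on with
    | _ m IH =>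
      intro a c hac hAac hAca hm
      have hab : a ∈ B c := mem_inBall_of_arc hAac
      have hba : c ∈ B a := mem_inBall_of_arc hAca
      have haa : a ∈ B a := mem_inBall_self A a
      have hbb : c ∈ B c := mem_inBall_self A c
      have step : ∀ r d : V, r ≠ d → A r d → A d r →
          (B r).ncard + (B d).ncard < m → False := by
        intro r d h1 h2 h3 h4
        exact IH _ h4 r d h1 h2 h3 rfl
      have hstrict : ∀ p q : V, B p ⊆ B q → p ≠ q → (B p).ncard < (B q).ncard := by
        intro p q hsub hne
        apply Set.ncard_lt_ncard _ (hfin _)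
        exact ⟨hsub, fun h' => hne (hBinj (Set.Subset.antisymm hsub h'))⟩
      -- the c-edge
      have hHb1 : B (h c) ⊆ B a := by
        have := hK3' a c hba; rwa [hh c] at this
      have hHb2 : B (h c) ⊆ B c := by
        have := hK3' c c hbb; rwa [hh c] at this
      have hbHb : c ∈ B (h c) := by
        rw [← hh c]; exact Set.mem_insert _ _
      -- the a-edge
      have hHa1 : B (h a) ⊆ B a := by
        have := hK3' a a haa; rwa [hh a] at this
      have hHa2 : B (h a) ⊆ B c := by
        have := hK3' c a hab; rwa [hh a] at this
      have haHa : a ∈ B (h a) := by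
        rw [← hh a]; exact Set.mem_insert _ _
      -- common auxiliary: from t a = B a' \ {a} style situations produce descent
      by_cases hyb : h c = c
      · -- B c ⊆ B a
        have hBc : B c ⊆ B a := by rw [← hyb]; exact hHb1
        by_cases hxa : h a = a
        · -- B a ⊆ B c: twins
          have hBa : B a ⊆ B c := by rw [← hxa]; exact hHa2
          exact hac (hBinj (Set.Subset.antisymm hBa hBc))
        · by_cases hxb : h a = c
          · -- B c = insert a (t a)
            have hBceq : B c = insert a (t a) := by rw [hh a, hxb]
            have hta : t a = B c \ {a} := by
              rw [hBceq, Set.insert_diff_self_of_notMem (htw a)]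
            have hbta : c ∈ t a := by rw [hta]; exact ⟨hbb, hac.symm⟩
            have h0 : t a ≠ ∅ := fun h' => by rw [h'] at hbta; exact hbta
            have hr : t a = B (k a) := (hk a).resolve_left h0
            have hrta : k a ∈ t a := by rw [hr]; exact mem_inBall_self A (k a)
            have hbr : c ∈ B (k a) := hr ▸ hbta
            have hrBc2 : k a ∈ B c := by
              have := hrta; rw [hta] at this; exact this.1
            have hrne_b : k a ≠ c := by
              intro h'
              have : a ∈ B (k a) := by rw [h']; exact hab
              rw [← hr, hta] at this
              exact this.2 rfl
            apply step (k a) c hrne_b (arc_of_mem_inBall hrBc2 hrne_b)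
              (arc_of_mem_inBall hbr (Ne.symm hrne_b))
            have hsub : B (k a) ⊆ B a := by
              rw [← hr, hta]
              exact Set.diff_subset.trans hBc
            have hne : k a ≠ a := by
              intro h'
              have : a ∈ B (k a) := by rw [h']; exact haa
              rw [← hr, hta] at this
              exact this.2 rfl
            have := hstrict (k a) a hsub hne
            omega
          · -- pair (h a, a)
            apply step (h a) a hxa
              (arc_of_mem_inBall (hHa1 (mem_inBall_self A (h a))) hxa)
              (arc_of_mem_inBall haHa (fun h' => hxa h'.symm))
            have := hstrict (h a) c hHa2 hxb
            omega
      · by_cases hya : h c = a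
        · -- B a = insert c (t c), so B a ⊆ B c
          have hBa : B a ⊆ B c := by rw [← hya]; exact hHb2
          by_cases hxa : h a = a
          · -- B a = insert a (t a), t a = B a \ {a}
            have hBaeq2 : B a = insert a (t a) := by rw [hh a, hxa]
            have hta : t a = B a \ {a} := by
              rw [hBaeq2, Set.insert_diff_self_of_notMem (htw a)]
            have hbta : c ∈ t a := by rw [hta]; exact ⟨hba, hac.symm⟩
            have h0 : t a ≠ ∅ := fun h' => by rw [h'] at hbta; exact hbta
            have hr : t a = B (k a) := (hk a).resolve_left h0
            have hrta : k a ∈ t a := by rw [hr]; exact mem_inBall_self A (k a)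
            have hbr : c ∈ B (k a) := hr ▸ hbta
            have hrBa : k a ∈ B a := by
              have := hrta; rw [hta] at this; exact this.1
            have hrne_b : k a ≠ c := by
              intro h'
              have : a ∈ B (k a) := by rw [h']; exact hab
              rw [← hr, hta] at this
              exact this.2 rfl
            apply step (k a) c hrne_b (arc_of_mem_inBall (hBa hrBa) hrne_b)
              (arc_of_mem_inBall hbr (Ne.symm hrne_b))
            have hsub : B (k a) ⊆ B a := by
              rw [← hr, hta]
              exact Set.diff_subset
            have hne : k a ≠ a := by
              intro h'
              have : a ∈ B (k a) := by rw [h']; exact haa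
              rw [← hr, hta] at this
              exact this.2 rfl
            have := hstrict (k a) a hsub hne
            omega
          · by_cases hxb : h a = c
            · -- B c ⊆ B a: twins
              have hBc : B c ⊆ B a := by rw [← hxb]; exact hHa1
              exact hac (hBinj (Set.Subset.antisymm hBa hBc))
            · apply step (h a) a hxa
                (arc_of_mem_inBall (hHa1 (mem_inBall_self A (h a))) hxa)
                (arc_of_mem_inBall haHa (fun h' => hxa h'.symm))
              have := hstrict (h a) c hHa2 hxb
              omega
        · -- pair (h c, c)
          apply step (h c) c hyb
            (arc_of_mem_inBall (hHb2 (mem_inBall_self A (h c))) hyb)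
            (arc_of_mem_inBall hbHb (fun h' => hyb h'.symm))
          have := hstrict (h c) a hHb1 hya
          omega
  exact hdesc _ u0 v0 huv0 hA0 hA0' rfl

/-- Every finite twin-free digraph with at least one pair of symmetric arcs admits an
identifying code of size at most `|V(D)| - 1`. -/
theorem idCode_le_of_symmetric_arc {V : Type} [Fintype V] (A : V → V → Prop)
    (htf : TwinFree A) (hsym : ∃ u v : V, u ≠ v ∧ A u v ∧ A v u) :
    ∃ C : Set V, IsIdCode A C ∧ C.ncard ≤ Fintype.card V - 1 := by
  classical
  by_cases hgood : ∃ w : V, IsIdCode A ({w}ᶜ)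
  · obtain ⟨w, hw⟩ := hgood
    refine ⟨{w}ᶜ, hw, ?_⟩
    have h1 : ({w}ᶜ : Set V).ncard < (Set.univ : Set V).ncard := by
      apply Set.ncard_lt_ncard _ (Set.toFinite _)
      constructor
      · exact Set.subset_univ _
      · intro hsub
        have : w ∈ ({w}ᶜ : Set V) := hsub (Set.mem_univ w)
        exact this rfl
    rw [Set.ncard_univ, Nat.card_eq_fintype_card] at h1
    omega
  · push_neg at hgood
    exact absurd hsym (no_sym_of_all_fail A htf hgood)
end

section
/- Let G = (S ∪ T, E) be a bipartite graph with |S| = |T| = n such that the neighbourhoods N(s) for s ∈ S are pairwise distinct and all nonempty (G is S-identifiable). Then there exists an S-separating code C ⊆ T of size at most n - 1, i.e., a set C with N(u) ∩ C ≠ N(v) ∩ C for all distinct u, v ∈ S. -/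
/-- **Bondy's theorem in bipartite-graph language.** Let `G = (S ∪ T, E)` be an
`S`-identifiable bipartite graph with `|S| = |T| = n` (the neighbourhoods `N(s)` are
pairwise distinct and nonempty). Then there is an `S`-separating code `C ⊆ T` of size at
most `n - 1`. -/
theorem bondy_bipartite {S T : Type} [Fintype S] [Fintype T] (n : ℕ)
    (hS : Fintype.card S = n) (hT : Fintype.card T = n)
    (E : S → T → Prop)
    (hdist : ∀ u v : S, u ≠ v → {t | E u t} ≠ {t | E v t})
    (hne : ∀ s : S, {t | E s t}.Nonempty) :
    ∃ C : Set T, C.ncard ≤ n - 1 ∧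
      ∀ u v : S, u ≠ v → {t | E u t} ∩ C ≠ {t | E v t} ∩ C := by
  classical
  rcases isEmpty_or_nonempty T with hTe | hTne
  · have : Fintype.card S = 0 := by
      rw [hS, ← hT]; exact Fintype.card_eq_zero
    haveI : IsEmpty S := Fintype.card_eq_zero_iff.mp this
    exact ⟨∅, by simp, fun u v h => (IsEmpty.false u).elim⟩
  by_cases hgood : ∃ t₀ : T, ∀ u v : S, u ≠ v → {t | E u t} \ {t₀} ≠ {t | E v t} \ {t₀}
  · obtain ⟨t₀, ht₀⟩ := hgood
    refine ⟨Set.univ \ {t₀}, ?_, ?_⟩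
    · have h1 : (Set.univ \ {t₀} : Set T).ncard = (Set.univ : Set T).ncard - 1 :=
        Set.ncard_diff_singleton_of_mem (Set.mem_univ t₀)
      rw [h1, Set.ncard_univ, Nat.card_eq_fintype_card, hT]
    · intro u v huv
      have hA : ∀ A : Set T, A ∩ (Set.univ \ {t₀}) = A \ {t₀} := by
        intro A; ext t; simp [Set.mem_diff]
      rw [hA, hA]
      exact ht₀ u v huv
  push_neg at hgood
  exfalso
  choose u v huv hset using hgood
  -- pointwise facts
  have hoff : ∀ t t' : T, t' ≠ t → (E (u t) t' ↔ E (v t) t') := by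
    intro t t' ht'
    have := Set.ext_iff.mp (hset t) t'
    simpa [ht'] using this
  have hat : ∀ t : T, ¬ (E (u t) t ↔ E (v t) t) := by
    intro t hiff
    apply hdist (u t) (v t) (huv t)
    ext t'
    by_cases h : t' = t
    · subst h; exact hiff
    · exact hoff t t' h
  haveI : Fact (Nat.Prime 2) := ⟨Nat.prime_two⟩
  set φ : S → T → ZMod 2 := fun s t => if E s t then 1 else 0 with hφ
  set ψ : T → S → ZMod 2 := fun t s =>
    (if s = u t then 1 else 0) + (if s = v t then 1 else 0) with hψ
  -- key identity
  have keyA : ∀ t : T, ∑ s : S, ψ t s • φ s = (fun t' => if t' = t then (1 : ZMod 2) else 0) := by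
    intro t
    have hsum : ∑ s : S, ψ t s • φ s = φ (u t) + φ (v t) := by
      simp only [hψ, add_smul, ite_smul, one_smul, zero_smul, Finset.sum_add_distrib,
        Finset.sum_ite_eq', Finset.mem_univ, if_true]
    rw [hsum]
    funext t'
    by_cases h : t' = t
    · subst h
      have := hat t'
      by_cases h1 : E (u t') t' <;> by_cases h2 : E (v t') t' <;>
        simp [hφ, h1, h2] at this ⊢
    · have hiff := hoff t t' h
      have heq : φ (u t) t' = φ (v t) t' := by
        simp only [hφ]
        by_cases h1 : E (u t) t'
        · rw [if_pos h1, if_pos (hiff.mp h1)]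
        · rw [if_neg h1, if_neg (fun h2 => h1 (hiff.mpr h2))]
      simp only [Pi.add_apply, heq, if_neg h]
      exact CharTwo.add_self_eq_zero _
  -- ψ is not linearly independent
  have hnli : ¬ LinearIndependent (ZMod 2) ψ := by
    intro hli
    obtain ⟨s₀⟩ : Nonempty S := by
      rw [← Fintype.card_pos_iff, hS, ← hT]; exact Fintype.card_pos
    set L : (S → ZMod 2) →ₗ[ZMod 2] ZMod 2 := ∑ s : S, LinearMap.proj s with hL
    have hLapp : ∀ w : S → ZMod 2, L w = ∑ s : S, w s := by
      intro w; simp [hL]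
    have hker : ∀ t : T, ψ t ∈ LinearMap.ker L := by
      intro t
      rw [LinearMap.mem_ker, hLapp]
      have h11 : (∑ s : S, ψ t s) = (1 : ZMod 2) + 1 := by
        simp [hψ, Finset.sum_add_distrib, Finset.sum_ite_eq', Finset.mem_univ]
      rw [h11]
      exact CharTwo.add_self_eq_zero 1
    have hsurj : Function.Surjective L := by
      intro c
      refine ⟨fun s => if s = s₀ then c else 0, ?_⟩
      rw [hLapp]; simp
    have hrange : LinearMap.range L = ⊤ := LinearMap.range_eq_top.mpr hsurj
    have hrk := LinearMap.finrank_range_add_finrank_ker L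
    rw [hrange] at hrk
    have htop : Module.finrank (ZMod 2) (⊤ : Submodule (ZMod 2) (ZMod 2)) = 1 := by
      simp [finrank_top]
    have hfun : Module.finrank (ZMod 2) (S → ZMod 2) = n := by
      simp [Module.finrank_fintype_fun_eq_card, hS]
    rw [htop, hfun] at hrk
    -- span ψ ≤ ker L
    have hspan : Submodule.span (ZMod 2) (Set.range ψ) ≤ LinearMap.ker L := by
      rw [Submodule.span_le]
      rintro _ ⟨t, rfl⟩
      exact hker t
    have h1 : Module.finrank (ZMod 2) (Submodule.span (ZMod 2) (Set.range ψ)) = n := by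
      rw [finrank_span_eq_card hli, hT]
    have h2 := Submodule.finrank_mono hspan
    rw [h1] at h2
    have hn1 : 1 ≤ n := by
      rw [← hT]; exact Fintype.card_pos
    omega
  rw [Fintype.not_linearIndependent_iff] at hnli
  obtain ⟨g, hrel, t₀, hg⟩ := hnli
  -- compute ∑ t, g t • e t = 0
  have hzero : ∑ t : T, g t • (fun t' => if t' = t then (1 : ZMod 2) else 0) = (0 : T → ZMod 2) := by
    calc ∑ t : T, g t • (fun t' => if t' = t then (1 : ZMod 2) else 0)
        = ∑ t : T, g t • ∑ s : S, ψ t s • φ s := by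
          refine Finset.sum_congr rfl fun t _ => by rw [keyA t]
      _ = ∑ t : T, ∑ s : S, (g t * ψ t s) • φ s := by
          refine Finset.sum_congr rfl fun t _ => ?_
          rw [Finset.smul_sum]
          exact Finset.sum_congr rfl fun s _ => by rw [smul_smul]
      _ = ∑ s : S, ∑ t : T, (g t * ψ t s) • φ s := Finset.sum_comm
      _ = ∑ s : S, ((∑ t : T, g t • ψ t) s) • φ s := by
          refine Finset.sum_congr rfl fun s _ => ?_
          have hx : (∑ t : T, g t • ψ t) s = ∑ t : T, g t * ψ t s := by
            rw [Finset.sum_apply]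
            exact Finset.sum_congr rfl fun t _ => rfl
          rw [hx, Finset.sum_smul]
      _ = 0 := by
          rw [hrel]; simp
  have := congrFun hzero t₀
  simp [Finset.sum_apply, mul_ite] at this
  exact hg this
end

section
/- Let X be a finite set and 𝒜 a family of distinct nonempty subsets of X with |𝒜| = |X|. Then the set system (𝒜, X) is extremal (for every x ∈ X, either some A ∈ 𝒜 satisfies A \ {x} = ∅, or some distinct A, A' ∈ 𝒜 satisfy A \ {x} = A' \ {x}) if and only if: (1) the union of all sets in 𝒜 equals X, and (2) for every A ∈ 𝒜 with |A| ≥ 2, there exists x ∈ A such that A \ {x} ∈ 𝒜. -/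
open Finset

set_option linter.unusedSectionVars false

namespace ExtremalAux

variable {X : Type} [Fintype X] [DecidableEq X]

/-- Indicator vector of the vertex `B` inside `V`. -/
def chi (V : Finset (Finset X)) (B : Finset X) : ↥V → ZMod 2 :=
  fun A => if (A : Finset X) = B then 1 else 0

lemma chi_sum (V : Finset (Finset X)) (B : Finset X) (hB : B ∈ V) (g : ↥V → ZMod 2) :
    (∑ A : ↥V, chi V B A * g A) = g ⟨B, hB⟩ := by
  rw [Finset.sum_eq_single (⟨B, hB⟩ : ↥V)]
  · simp [chi]
  · intro A _ hA
    have h : (A : Finset X) ≠ B := fun h => hA (Subtype.ext h)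
    simp [chi, h]
  · intro h
    exact absurd (Finset.mem_univ _) h

/-- The GF(2)-linear combination of the empty vertex and the witness edges. -/
def Lmap (V : Finset (Finset X)) (w : X → Finset X) (c : Option X → ZMod 2) :
    ↥V → ZMod 2 :=
  fun A => c none * chi V ∅ A +
    ∑ x : X, c (some x) * (chi V (w x) A + chi V ((w x).erase x) A)

/-- The "content" map reading off element-membership parities. -/
def Phi (V : Finset (Finset X)) (f : ↥V → ZMod 2) : X → ZMod 2 :=
  fun y => ∑ A : ↥V, f A * (if y ∈ (A : Finset X) then 1 else 0)

lemma Phi_chi (V : Finset (Finset X)) (B : Finset X) (hB : B ∈ V) (y : X) :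
    Phi V (chi V B) y = (if y ∈ B then 1 else 0) := by
  unfold Phi
  exact chi_sum V B hB _

lemma Phi_Lmap (V : Finset (Finset X)) (w : X → Finset X)
    (h0 : (∅ : Finset X) ∈ V) (hwV : ∀ x, w x ∈ V) (hwx : ∀ x, x ∈ w x)
    (heV : ∀ x, (w x).erase x ∈ V) (c : Option X → ZMod 2) (y : X) :
    Phi V (Lmap V w c) y = c (some y) := by
  unfold Phi Lmap
  have expand : ∀ A : ↥V,
      (c none * chi V ∅ A +
        ∑ x : X, c (some x) * (chi V (w x) A + chi V ((w x).erase x) A))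
          * (if y ∈ (A : Finset X) then 1 else 0)
      = c none * (chi V ∅ A * (if y ∈ (A : Finset X) then 1 else 0))
        + ∑ x : X, c (some x) * (chi V (w x) A * (if y ∈ (A : Finset X) then 1 else 0)
            + chi V ((w x).erase x) A * (if y ∈ (A : Finset X) then 1 else 0)) := by
    intro A
    rw [add_mul, Finset.sum_mul, mul_assoc]
    congr 1
    exact Finset.sum_congr rfl fun x _ => by ring
  rw [Finset.sum_congr rfl fun A _ => expand A, Finset.sum_add_distrib, ← Finset.mul_sum,
    chi_sum V ∅ h0, Finset.sum_comm]
  have inner : ∀ x : X,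
      (∑ A : ↥V, c (some x) * (chi V (w x) A * (if y ∈ (A : Finset X) then 1 else 0)
        + chi V ((w x).erase x) A * (if y ∈ (A : Finset X) then 1 else 0)))
      = c (some x) * ((if y ∈ w x then 1 else 0) + (if y ∈ (w x).erase x then 1 else 0)) := by
    intro x
    rw [← Finset.mul_sum, Finset.sum_add_distrib, chi_sum V (w x) (hwV x),
      chi_sum V ((w x).erase x) (heV x)]
  rw [Finset.sum_congr rfl fun x _ => inner x]
  have h0' : (if y ∈ ((⟨∅, h0⟩ : ↥V) : Finset X) then (1 : ZMod 2) else 0) = 0 := by simp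
  rw [h0', mul_zero, zero_add]
  rw [Finset.sum_eq_single y]
  · simp [hwx y, Finset.notMem_erase]
  · intro x _ hxy
    have hiff : (y ∈ (w x).erase x) ↔ y ∈ w x :=
      ⟨fun h => (Finset.mem_erase.1 h).2, fun h => Finset.mem_erase.2 ⟨Ne.symm hxy, h⟩⟩
    have h2 : (1 : ZMod 2) + 1 = 0 := by decide
    simp only [hiff]
    by_cases hy : y ∈ w x
    · simp [hy, h2]
    · simp [hy]
  · intro h
    exact absurd (Finset.mem_univ _) h

lemma Lmap_inj (V : Finset (Finset X)) (w : X → Finset X)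
    (h0 : (∅ : Finset X) ∈ V) (hwV : ∀ x, w x ∈ V) (hwx : ∀ x, x ∈ w x)
    (heV : ∀ x, (w x).erase x ∈ V) : Function.Injective (Lmap V w) := by
  intro c c' h
  have hsome : ∀ y, c (some y) = c' (some y) := fun y => by
    rw [← Phi_Lmap V w h0 hwV hwx heV c y, h, Phi_Lmap V w h0 hwV hwx heV c' y]
  have hval := congrFun h ⟨∅, h0⟩
  unfold Lmap at hval
  have hchi0 : chi V ∅ (⟨∅, h0⟩ : ↥V) = 1 := by simp [chi]
  rw [hchi0, mul_one, mul_one] at hval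
  have hS : (∑ x : X, c (some x) *
        (chi V (w x) (⟨∅, h0⟩ : ↥V) + chi V ((w x).erase x) (⟨∅, h0⟩ : ↥V)))
      = ∑ x : X, c' (some x) *
        (chi V (w x) (⟨∅, h0⟩ : ↥V) + chi V ((w x).erase x) (⟨∅, h0⟩ : ↥V)) :=
    Finset.sum_congr rfl fun x _ => by rw [hsome x]
  rw [hS] at hval
  have hnone : c none = c' none := add_right_cancel hval
  funext z
  cases z with
  | none => exact hnone
  | some y => exact hsome y

end ExtremalAux

/-- A set system `(𝒜, X)` of distinct nonempty subsets with `|𝒜| = |X|` is extremal if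
for every `x ∈ X`, either deleting `x` empties some member of `𝒜` or merges two distinct
members of `𝒜`. -/
def Extremal {X : Type} [DecidableEq X] (𝒜 : Finset (Finset X)) : Prop :=
  ∀ x : X, (∃ A ∈ 𝒜, A \ {x} = ∅) ∨
    (∃ A ∈ 𝒜, ∃ A' ∈ 𝒜, A ≠ A' ∧ A \ {x} = A' \ {x})

/-- A set system `(𝒜, X)` of distinct nonempty subsets with `|𝒜| = |X|` is extremal iff
the union of all members of `𝒜` is `X` and every member of `𝒜` of size at least two has
an element whose removal yields another member of `𝒜`. -/
theorem extremal_iff_set_description {X : Type} [Fintype X] [DecidableEq X]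
    (𝒜 : Finset (Finset X)) (hcard : 𝒜.card = Fintype.card X)
    (hne : ∀ A ∈ 𝒜, A.Nonempty) :
    Extremal 𝒜 ↔
      ((∀ x : X, ∃ A ∈ 𝒜, x ∈ A) ∧
        (∀ A ∈ 𝒜, 2 ≤ A.card → ∃ x ∈ A, A.erase x ∈ 𝒜)) := by
  classical
  constructor
  · intro hext
    -- choose a witness set for every element
    have hw : ∀ x : X, ∃ A, A ∈ 𝒜 ∧ x ∈ A ∧ A.erase x ∈ insert (∅ : Finset X) 𝒜 := by
      intro x
      rcases hext x with ⟨A, hA, hAe⟩ | ⟨A, hA, A', hA', hAA', heq⟩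
      · rw [Finset.sdiff_singleton_eq_erase] at hAe
        have hx : x ∈ A := by
          obtain ⟨a, ha⟩ := hne A hA
          have hax : a = x := by
            by_contra hax
            have : a ∈ A.erase x := Finset.mem_erase.2 ⟨hax, ha⟩
            simp [hAe] at this
          exact hax ▸ ha
        exact ⟨A, hA, hx, by rw [hAe]; exact Finset.mem_insert_self _ _⟩
      · rw [Finset.sdiff_singleton_eq_erase, Finset.sdiff_singleton_eq_erase] at heq
        by_cases hx : x ∈ A
        · have hx' : x ∉ A' := by
            intro hx'
            exact hAA' (by rw [← Finset.insert_erase hx, heq, Finset.insert_erase hx'])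
          refine ⟨A, hA, hx, ?_⟩
          rw [heq, Finset.erase_eq_of_notMem hx']
          exact Finset.mem_insert_of_mem hA'
        · have hx' : x ∈ A' := by
            by_contra hx'
            exact hAA' (by rw [← Finset.erase_eq_of_notMem hx, heq,
              Finset.erase_eq_of_notMem hx'])
          refine ⟨A', hA', hx', ?_⟩
          rw [← heq, Finset.erase_eq_of_notMem hx]
          exact Finset.mem_insert_of_mem hA
    choose w hw1 hw2 hw3 using hw
    refine ⟨fun x => ⟨w x, hw1 x, hw2 x⟩, ?_⟩
    intro A hA hA2
    by_contra hcon
    push_neg at hcon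
    -- the vertex set
    have hem : (∅ : Finset X) ∉ 𝒜 := fun h => by simpa using hne ∅ h
    have hV0 : (∅ : Finset X) ∈ insert (∅ : Finset X) 𝒜 := Finset.mem_insert_self _ _
    have hwV : ∀ x, w x ∈ insert (∅ : Finset X) 𝒜 :=
      fun x => Finset.mem_insert_of_mem (hw1 x)
    have hAV : A ∈ insert (∅ : Finset X) 𝒜 := Finset.mem_insert_of_mem hA
    have hsurj : Function.Surjective (ExtremalAux.Lmap (insert (∅ : Finset X) 𝒜) w) := by
      have hinj := ExtremalAux.Lmap_inj (insert (∅ : Finset X) 𝒜) w hV0 hwV hw2 hw3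
      have hcards : Fintype.card (Option X → ZMod 2)
          = Fintype.card (↥(insert (∅ : Finset X) 𝒜) → ZMod 2) := by
        rw [Fintype.card_fun, Fintype.card_fun, Fintype.card_option, Fintype.card_coe,
          Finset.card_insert_of_notMem hem, hcard]
      exact ((Fintype.bijective_iff_injective_and_card _).2 ⟨hinj, hcards⟩).2
    obtain ⟨c, hc⟩ := hsurj (ExtremalAux.chi (insert (∅ : Finset X) 𝒜) A)
    have hcy : ∀ y, c (some y) = (if y ∈ A then (1 : ZMod 2) else 0) := fun y => by
      rw [← ExtremalAux.Phi_Lmap (insert (∅ : Finset X) 𝒜) w hV0 hwV hw2 hw3 c y, hc,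
        ExtremalAux.Phi_chi (insert (∅ : Finset X) 𝒜) A hAV y]
    have hval := congrFun hc ⟨A, hAV⟩
    unfold ExtremalAux.Lmap at hval
    have h1 : ExtremalAux.chi (insert (∅ : Finset X) 𝒜) A
        (⟨A, hAV⟩ : ↥(insert (∅ : Finset X) 𝒜)) = 1 := by simp [ExtremalAux.chi]
    have hAne : A ≠ ∅ := (hne A hA).ne_empty
    have h2 : ExtremalAux.chi (insert (∅ : Finset X) 𝒜) ∅
        (⟨A, hAV⟩ : ↥(insert (∅ : Finset X) 𝒜)) = 0 := by simp [ExtremalAux.chi, hAne]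
    rw [h1, h2, mul_zero, zero_add] at hval
    have hzero : ∀ x : X, c (some x) *
        (ExtremalAux.chi (insert (∅ : Finset X) 𝒜) (w x)
            (⟨A, hAV⟩ : ↥(insert (∅ : Finset X) 𝒜))
          + ExtremalAux.chi (insert (∅ : Finset X) 𝒜) ((w x).erase x)
            (⟨A, hAV⟩ : ↥(insert (∅ : Finset X) 𝒜))) = 0 := by
      intro x
      by_cases hxA : x ∈ A
      · have hz1 : ExtremalAux.chi (insert (∅ : Finset X) 𝒜) ((w x).erase x)
            (⟨A, hAV⟩ : ↥(insert (∅ : Finset X) 𝒜)) = 0 := by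
          have hne2 : A ≠ (w x).erase x :=
            fun h => Finset.notMem_erase x (w x) (h ▸ hxA)
          simp [ExtremalAux.chi, hne2]
        have hz2 : ExtremalAux.chi (insert (∅ : Finset X) 𝒜) (w x)
            (⟨A, hAV⟩ : ↥(insert (∅ : Finset X) 𝒜)) = 0 := by
          have hne3 : A ≠ w x := by
            intro h
            have h3 := hw3 x
            rw [← h] at h3
            rcases Finset.mem_insert.1 h3 with h4 | h4
            · have hc1 : (A.erase x).card = A.card - 1 := Finset.card_erase_of_mem hxA
              rw [h4] at hc1
              simp only [Finset.card_empty] at hc1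
              omega
            · exact hcon x hxA h4
          simp [ExtremalAux.chi, hne3]
        rw [hz1, hz2, add_zero, mul_zero]
      · rw [hcy x, if_neg hxA, zero_mul]
    rw [Finset.sum_congr rfl (fun x _ => hzero x), Finset.sum_const_zero] at hval
    exact one_ne_zero hval.symm
  · rintro ⟨h1, h2⟩ x
    obtain ⟨A0, hA0, hxA0⟩ := h1 x
    have key : ∀ (n : ℕ) (A : Finset X), A.card ≤ n → A ∈ 𝒜 → x ∈ A →
        ((∃ B ∈ 𝒜, B \ {x} = ∅) ∨
          (∃ B ∈ 𝒜, ∃ B' ∈ 𝒜, B ≠ B' ∧ B \ {x} = B' \ {x})) := by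
      intro n
      induction n with
      | zero =>
        intro A hcA _ hxA
        have : 0 < A.card := Finset.card_pos.2 ⟨x, hxA⟩
        omega
      | succ n ih =>
        intro A hcA hA hxA
        by_cases hc1 : A.card ≤ 1
        · left
          refine ⟨A, hA, ?_⟩
          have hA1 : A = {x} := by
            have hone : A.card = 1 := le_antisymm hc1 (Finset.card_pos.2 ⟨x, hxA⟩)
            obtain ⟨a, ha⟩ := Finset.card_eq_one.1 hone
            rw [ha] at hxA ⊢
            rw [Finset.mem_singleton] at hxA
            rw [hxA]
          rw [hA1]
          simp
        · push_neg at hc1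
          obtain ⟨y, hyA, hAy⟩ := h2 A hA hc1
          by_cases hxy : y = x
          · right
            subst hxy
            refine ⟨A, hA, A.erase y, hAy, ?_, ?_⟩
            · intro h
              exact Finset.notMem_erase y A (h ▸ hyA)
            · rw [Finset.sdiff_singleton_eq_erase, Finset.sdiff_singleton_eq_erase,
                Finset.erase_idem]
          · have hx' : x ∈ A.erase y := Finset.mem_erase.2 ⟨fun h => hxy h.symm, hxA⟩
            have hcard' : (A.erase y).card ≤ n := by
              have := Finset.card_erase_of_mem hyA
              omega
            exact ih (A.erase y) hcard' hAy hx'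
    exact key A0.card A0 le_rfl hA0 hxA0
end

section
/- Let X be a finite set and 𝒜 a family of distinct nonempty subsets of X with |𝒜| = |X|, such that the incidence bipartite graph B(𝒜, X) admits no perfect matching. Then (𝒜, X) is not extremal: there exists x₀ ∈ X such that the sets A \ {x₀} for A ∈ 𝒜 are all distinct and nonempty. -/
open Finset

private def chiFun {X : Type} [DecidableEq X] (A : Finset X) : X → ZMod 2 :=
  ∑ a ∈ A, Pi.single a 1

private lemma chiFun_insert {X : Type} [DecidableEq X] {x : X} {C : Finset X} (h : x ∉ C) :
    chiFun (insert x C) = Pi.single x 1 + chiFun C := by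
  simp [chiFun, Finset.sum_insert h]

/-- Let `(𝒜, X)` be a set system of distinct nonempty subsets with `|𝒜| = |X|` whose
incidence bipartite graph has no perfect matching (no injective choice function picking
an element from each member of `𝒜`). Then `(𝒜, X)` is not extremal: some `x₀ ∈ X` can be
deleted keeping the sets `A \ {x₀}` distinct and nonempty. -/
theorem not_extremal_of_no_matching {X : Type} [Fintype X] [DecidableEq X]
    (𝒜 : Finset (Finset X)) (hcard : 𝒜.card = Fintype.card X)
    (hne : ∀ A ∈ 𝒜, A.Nonempty)
    (hnm : ¬ ∃ f : {A // A ∈ 𝒜} → X, Function.Injective f ∧ ∀ A, f A ∈ A.1) :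
    ∃ x₀ : X, (∀ A ∈ 𝒜, (A \ {x₀}).Nonempty) ∧
      Set.InjOn (fun A : Finset X => A \ {x₀}) ↑𝒜 := by
  classical
  by_contra hcon
  push_neg at hcon
  -- every x is "bad"
  have hbad : ∀ x : X, ∃ B ∈ 𝒜, x ∈ B ∧ (B \ {x} = ∅ ∨ B \ {x} ∈ 𝒜) := by
    intro x
    by_cases hemp : ∀ A ∈ 𝒜, (A \ {x}).Nonempty
    · have hni := hcon x hemp
      rw [Set.InjOn] at hni
      push_neg at hni
      obtain ⟨A, hA, B, hB, hAB, hne'⟩ := hni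
      simp only [Finset.mem_coe] at hA hB
      have key : ∀ A B : Finset X, A ∈ 𝒜 → B ∈ 𝒜 → A \ {x} = B \ {x} → A ≠ B → x ∈ B →
          x ∈ B ∧ B \ {x} ∈ 𝒜 := by
        intro A B hA hB hAB hne' hxB
        have hxA : x ∉ A := by
          intro hxA
          apply hne'
          have : insert x (A \ {x}) = insert x (B \ {x}) := by rw [hAB]
          rwa [Finset.sdiff_singleton_eq_erase, Finset.sdiff_singleton_eq_erase,
            Finset.insert_erase hxA, Finset.insert_erase hxB] at this
        refine ⟨hxB, ?_⟩
        rw [← hAB, Finset.sdiff_singleton_eq_erase, Finset.erase_eq_of_notMem hxA]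
        exact hA
      by_cases hxB : x ∈ B
      · obtain ⟨h1, h2⟩ := key A B hA hB hAB hne' hxB
        exact ⟨B, hB, h1, Or.inr h2⟩
      · by_cases hxA : x ∈ A
        · obtain ⟨h1, h2⟩ := key B A hB hA hAB.symm (Ne.symm hne') hxA
          exact ⟨A, hA, h1, Or.inr h2⟩
        · exfalso
          apply hne'
          rw [Finset.sdiff_singleton_eq_erase, Finset.sdiff_singleton_eq_erase,
            Finset.erase_eq_of_notMem hxA, Finset.erase_eq_of_notMem hxB] at hAB
          exact hAB
    · push_neg at hemp
      obtain ⟨A, hA, hAe⟩ := hemp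
      have hxA : x ∈ A := by
        obtain ⟨a, ha⟩ := hne A hA
        have : a ∈ A \ {x} ∨ a ∈ ({x} : Finset X) := by
          by_cases h : a = x
          · exact Or.inr (by simp [h])
          · exact Or.inl (Finset.mem_sdiff.mpr ⟨ha, by simp [h]⟩)
        rcases this with h | h
        · rw [hAe] at h; exact absurd h (Finset.notMem_empty a)
        · rwa [Finset.mem_singleton.mp h] at ha
      exact ⟨A, hA, hxA, Or.inl hAe⟩
  -- Hall's condition fails
  have hs : ∃ s : Finset {A // A ∈ 𝒜}, ((s.biUnion fun A => A.1).card < s.card) := by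
    by_contra hs
    push_neg at hs
    exact hnm ((Finset.all_card_le_biUnion_card_iff_exists_injective
      (fun A : {A // A ∈ 𝒜} => A.1)).mp hs)
  obtain ⟨s, hscard⟩ := hs
  set Y : Finset X := s.biUnion (fun A => A.1) with hY
  set N : Finset (Finset X) := 𝒜.filter (fun A => ¬ A ⊆ Y) with hN
  -- cardinality bound : N.card + Y.card < Fintype.card X
  have hsub : s.card ≤ (𝒜.filter (fun A => A ⊆ Y)).card := by
    have himg : s.image Subtype.val ⊆ 𝒜.filter (fun A => A ⊆ Y) := by
      intro A hA
      obtain ⟨B, hB, rfl⟩ := Finset.mem_image.mp hA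
      refine Finset.mem_filter.mpr ⟨B.2, ?_⟩
      intro a ha
      exact Finset.mem_biUnion.mpr ⟨B, hB, ha⟩
    calc s.card = (s.image Subtype.val).card :=
          (Finset.card_image_of_injective s Subtype.val_injective).symm
      _ ≤ _ := Finset.card_le_card himg
  have hpart : (𝒜.filter (fun A => A ⊆ Y)).card + N.card = 𝒜.card :=
    Finset.card_filter_add_card_filter_not _
  have hNY : N.card + Y.card < Fintype.card X := by omega
  -- the spanning finset
  set S : Finset (X → ZMod 2) :=
    N.image chiFun ∪ Y.image (fun y => Pi.single y 1) with hS
  have hcardS : S.card ≤ N.card + Y.card :=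
    le_trans (Finset.card_union_le _ _)
      (add_le_add Finset.card_image_le Finset.card_image_le)
  have hsingle : ∀ y ∈ Y, (Pi.single y 1 : X → ZMod 2) ∈
      Submodule.span (ZMod 2) (S : Set (X → ZMod 2)) := by
    intro y hy
    exact Submodule.subset_span (by
      simp only [hS, Finset.coe_union, Set.mem_union, Finset.mem_coe, Finset.mem_image]
      exact Or.inr ⟨y, hy, rfl⟩)
  have htop : Submodule.span (ZMod 2) (S : Set (X → ZMod 2)) = ⊤ := by
    rw [eq_top_iff, ← (Pi.basisFun (ZMod 2) X).span_eq]
    refine Submodule.span_le.mpr ?_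
    rintro _ ⟨x, rfl⟩
    rw [Pi.basisFun_apply]
    by_cases hxY : x ∈ Y
    · exact hsingle x hxY
    · obtain ⟨B, hB, hxB, hC⟩ := hbad x
      have hBN : B ∈ N := Finset.mem_filter.mpr ⟨hB, fun hsub => hxY (hsub hxB)⟩
      have h1 : chiFun B ∈ Submodule.span (ZMod 2) (S : Set (X → ZMod 2)) :=
        Submodule.subset_span (by
          simp only [hS, Finset.coe_union, Set.mem_union, Finset.mem_coe, Finset.mem_image]
          exact Or.inl ⟨B, hBN, rfl⟩)
      have h2 : chiFun (B \ {x}) ∈ Submodule.span (ZMod 2) (S : Set (X → ZMod 2)) := by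
        rcases hC with h | h
        · rw [h]; simp [chiFun]
        · by_cases hCY : B \ {x} ⊆ Y
          · rw [chiFun]
            exact Submodule.sum_mem _ (fun y hy => hsingle y (hCY hy))
          · exact Submodule.subset_span (by
              simp only [hS, Finset.coe_union, Set.mem_union, Finset.mem_coe, Finset.mem_image]
              exact Or.inl ⟨B \ {x}, Finset.mem_filter.mpr ⟨h, hCY⟩, rfl⟩)
      have heq : (Pi.single x 1 : X → ZMod 2) = chiFun B - chiFun (B \ {x}) := by
        have hxC : x ∉ B \ {x} := by simp
        have hBi : B = insert x (B \ {x}) := by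
          rw [Finset.sdiff_singleton_eq_erase, Finset.insert_erase hxB]
        have hchiB : chiFun B = Pi.single x 1 + chiFun (B \ {x}) := by
          conv_lhs => rw [hBi]
          exact chiFun_insert hxC
        rw [hchiB]
        abel
      rw [heq]
      exact Submodule.sub_mem _ h1 h2
  -- finrank contradiction
  have hr2 : Module.finrank (ZMod 2)
      (Submodule.span (ZMod 2) (S : Set (X → ZMod 2))) ≤ S.card :=
    finrank_span_finset_le_card S
  rw [htop, finrank_top, Module.finrank_fintype_fun_eq_card] at hr2
  omega
end

section
/- Every source transitive tree (finite-source or infinite-source transitive tree) D, possibly on a countably infinite vertex set, has the property that its only identifying code is the whole vertex set V(D). -/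
/-- An oriented graph is a *source transitive tree* if every closed in-ball `B₁⁺(x)`
induces the transitive closure of a directed path `P_x = B₁⁺(x)` ending at `x` (the
induced relation is a strict total order with greatest element `x`), any two such paths
intersect in a path `P_z`, and either all the paths are finite (fst-tree) or all are
infinite with each vertex having finitely many successors on its path (ist-tree). -/
def IsSourceTransTree {V : Type} (A : V → V → Prop) : Prop :=
  (∀ x y : V, ¬ (A x y ∧ A y x)) ∧
  (∀ x : V, ∀ y ∈ inBall A x, ∀ z ∈ inBall A x, y ≠ z → A y z ∨ A z y) ∧
  (∀ x : V, ∀ y ∈ inBall A x, ∀ z ∈ inBall A x, ∀ w ∈ inBall A x,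
    A y z → A z w → A y w) ∧
  (∀ x y : V, ∃ z : V, inBall A x ∩ inBall A y = inBall A z) ∧
  ((∀ x : V, (inBall A x).Finite) ∨
    (∀ x : V, (inBall A x).Infinite ∧
      ∀ y ∈ inBall A x, {z ∈ inBall A x | A y z}.Finite))

/-- The only identifying code of a (finite or countably infinite) source transitive tree
is its whole vertex set. -/
theorem sourceTransTree_only_idCode_univ {V : Type} [Countable V] (A : V → V → Prop)
    (h : IsSourceTransTree A) :
    ∀ C : Set V, IsIdCode A C → C = Set.univ := by
  classical
  obtain ⟨hasym, htot, htrans, hinter, hfin⟩ := h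
  have hmem : ∀ x y : V, y ∈ inBall A x ↔ y = x ∨ A y x := by
    intro x y; simp [inBall]
  have hself : ∀ x : V, x ∈ inBall A x := fun x => Set.mem_insert _ _
  -- if A u v then the ball of u is contained in the ball of v
  have L1 : ∀ u v : V, A u v → inBall A u ⊆ inBall A v := by
    intro u v huv
    obtain ⟨z, hz⟩ := hinter u v
    have hu : u ∈ inBall A z := by
      rw [← hz]; exact ⟨hself u, (hmem v u).2 (Or.inr huv)⟩
    rcases (hmem z u).1 hu with rfl | huz
    · intro w hw
      have hw' : w ∈ inBall A u ∩ inBall A v := by rw [hz]; exact hw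
      exact hw'.2
    · have hzz : z ∈ inBall A u ∩ inBall A v := by rw [hz]; exact hself z
      rcases (hmem u z).1 hzz.1 with rfl | hzu
      · exact absurd ⟨huz, huz⟩ (hasym z z)
      · exact absurd ⟨huz, hzu⟩ (hasym u z)
  -- every finite nonempty subset of a ball has a greatest element
  have hgrF : ∀ (v : V) (s : Finset V), (↑s : Set V) ⊆ inBall A v → s.Nonempty →
      ∃ m ∈ s, ∀ w ∈ s, w ≠ m → A w m := by
    intro v s
    induction s using Finset.induction_on with
    | empty => intro _ hne; exact absurd hne (by simp)
    | @insert a s ha ih =>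
      intro hsub _
      by_cases hs : s.Nonempty
      · obtain ⟨m, hm, hmax⟩ := ih (fun w hw => hsub (by simp [hw])) hs
        have ham : a ≠ m := fun e => ha (e ▸ hm)
        have hav : a ∈ inBall A v := hsub (by simp)
        have hmv : m ∈ inBall A v := hsub (by simp [hm])
        rcases htot v a hav m hmv ham with ham' | hma
        · refine ⟨m, by simp [hm], fun w hw hwm => ?_⟩
          rcases Finset.mem_insert.1 hw with rfl | hw'
          · exact ham'
          · exact hmax w hw' hwm
        · refine ⟨a, by simp, fun w hw hwa => ?_⟩
          rcases Finset.mem_insert.1 hw with rfl | hw'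
          · exact absurd rfl hwa
          · by_cases hwm : w = m
            · exact hwm ▸ hma
            · exact htrans v w (hsub (by simp [hw'])) m hmv a hav (hmax w hw' hwm) hma
      · rw [Finset.not_nonempty_iff_eq_empty] at hs
        subst hs
        exact ⟨a, by simp, fun w hw hwa => absurd (by simpa using hw) hwa⟩
  have hgr : ∀ (v : V) (T : Set V), T.Finite → T ⊆ inBall A v → T.Nonempty →
      ∃ m ∈ T, ∀ w ∈ T, w ≠ m → A w m := by
    intro v T hTfin hTsub hTne
    obtain ⟨m, hm, hmax⟩ := hgrF v hTfin.toFinset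
      (by intro w hw; exact hTsub (by simpa using hw))
      (by simpa [Set.Finite.toFinset] using hTne)
    refine ⟨m, by simpa using hm, fun w hw hwm => hmax w (by simpa using hw) hwm⟩
  intro C hC
  by_contra hne
  have hex : ∃ v, v ∉ C := by
    by_contra h'
    push_neg at h'
    exact hne (Set.eq_univ_of_forall h')
  obtain ⟨v, hv⟩ := hex
  obtain ⟨c, hc⟩ := hC.1 v
  have hcv : c ∈ inBall A v := hc.1
  set F : Set V := inBall A v ∩ C ∩ insert c {z ∈ inBall A v | A c z} with hFdef
  have hFfin : F.Finite := by
    rcases hfin with hf | hf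
    · exact (hf v).subset (fun w hw => hw.1.1)
    · exact (((hf v).2 c hcv).insert c).subset (fun w hw => hw.2)
  have hFsub : F ⊆ inBall A v := fun w hw => hw.1.1
  have hcF : c ∈ F := ⟨⟨hc.1, hc.2⟩, Set.mem_insert _ _⟩
  obtain ⟨m, hmF, hmax⟩ := hgr v F hFfin hFsub ⟨c, hcF⟩
  have hmball : m ∈ inBall A v := hmF.1.1
  have hmC : m ∈ C := hmF.1.2
  -- m is greatest in inBall A v ∩ C
  have hmax' : ∀ w ∈ inBall A v ∩ C, w ≠ m → A w m := by
    intro w hw hwm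
    by_cases hwF : w ∈ F
    · exact hmax w hwF hwm
    · have hwc : w ≠ c := fun e => hwF (e ▸ hcF)
      have hncw : ¬ A c w := by
        intro hcw
        exact hwF ⟨hw, Set.mem_insert_iff.2 (Or.inr ⟨hw.1, hcw⟩)⟩
      have hwcA : A w c := by
        rcases htot v w hw.1 c hcv hwc with h1 | h1
        · exact h1
        · exact absurd h1 hncw
      by_cases hcm : c = m
      · exact hcm ▸ hwcA
      · exact htrans v w hw.1 c hcv m hmball hwcA (hmax c hcF hcm)
  have hmv : m ≠ v := fun e => hv (e ▸ hmC)
  have hAmv : A m v := by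
    rcases (hmem v m).1 hmball with e | h1
    · exact absurd e hmv
    · exact h1
  have heq : inBall A m ∩ C = inBall A v ∩ C := by
    ext w
    constructor
    · intro hw; exact ⟨L1 m v hAmv hw.1, hw.2⟩
    · intro hw
      by_cases hwm : w = m
      · exact ⟨hwm ▸ hself m, hw.2⟩
      · exact ⟨(hmem m w).2 (Or.inr (hmax' w hw hwm)), hw.2⟩
  exact hC.2 m v hmv heq
end

section
/- Let D be an oriented graph (finite or countably infinite, without symmetric arcs) and let x be a vertex such that V(D) \ {x} is not an identifying code of D. Then either x is a source (has no in-neighbour), or there exists a unique vertex x₋₁ ≠ x such that B₁⁺(x) = B₁⁺(x₋₁) ∪ {x}. -/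
lemma mem_inBall_iff {V : Type} (A : V → V → Prop) (x y : V) :
    y ∈ inBall A x ↔ y = x ∨ A y x := Set.mem_insert_iff

lemma oriented_twinFree {V : Type} {A : V → V → Prop}
    (hor : ∀ u v : V, ¬ (A u v ∧ A v u)) : TwinFree A := by
  intro u v huv h
  have hu : u ∈ inBall A v := h ▸ Set.mem_insert u _
  have hv : v ∈ inBall A u := h.symm ▸ Set.mem_insert v _
  rw [mem_inBall_iff] at hu hv
  rcases hu with rfl | hu
  · exact huv rfl
  rcases hv with rfl | hv
  · exact huv rfl
  exact hor u v ⟨hu, hv⟩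

lemma key_aux {V : Type} {A : V → V → Prop}
    (hor : ∀ u v : V, ¬ (A u v ∧ A v u)) {u v x : V} (huv : u ≠ v)
    (heq : inBall A u ∩ ({x}ᶜ : Set V) = inBall A v ∩ ({x}ᶜ : Set V))
    (hxu : x ∈ inBall A u) (hxv : x ∉ inBall A v) :
    u = x ∧ v ≠ x ∧ inBall A x = insert x (inBall A v) := by
  have hball : inBall A u = insert x (inBall A v) := by
    ext y
    by_cases hy : y = x
    · subst hy
      simp [hxu]
    · have h1 : y ∈ inBall A u ↔ y ∈ inBall A u ∩ ({x}ᶜ : Set V) := by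
        simp [hy]
      have h2 : y ∈ inBall A v ↔ y ∈ inBall A v ∩ ({x}ᶜ : Set V) := by
        simp [hy]
      rw [h1, heq, ← h2]
      exact ⟨fun h => Set.mem_insert_of_mem x h,
        fun h => (Set.mem_insert_iff.1 h).resolve_left hy⟩
  have hux : u = x := by
    by_contra hux
    have hAxu : A x u := ((mem_inBall_iff A u x).1 hxu).resolve_left (fun h => hux h.symm)
    have hvu : v ∈ inBall A u := hball ▸ Set.mem_insert_of_mem x (Set.mem_insert v _)
    have hAvu : A v u := ((mem_inBall_iff A u v).1 hvu).resolve_left (fun h => huv h.symm)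
    have huu : u ∈ inBall A u := Set.mem_insert u _
    rw [hball, Set.mem_insert_iff] at huu
    rcases huu with h | h
    · exact hux h
    · rcases (mem_inBall_iff A v u).1 h with h' | h'
      · exact huv h'
      · exact hor u v ⟨h', hAvu⟩
  subst hux
  exact ⟨rfl, fun h => huv h.symm, hball⟩

lemma x_not_mem {V : Type} {A : V → V → Prop}
    (hor : ∀ u v : V, ¬ (A u v ∧ A v u)) {v x : V} (hvx : v ≠ x)
    (h : inBall A x = insert x (inBall A v)) : x ∉ inBall A v := by
  intro hx
  have hAxv : A x v := ((mem_inBall_iff A v x).1 hx).resolve_left (fun h' => hvx h'.symm)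
  have hvmem : v ∈ inBall A x := h ▸ Set.mem_insert_of_mem x (Set.mem_insert v _)
  have hAvx : A v x := ((mem_inBall_iff A x v).1 hvmem).resolve_left hvx
  exact hor x v ⟨hAxv, hAvx⟩

/-- In a (finite or countably infinite) oriented graph, if `V(D) - x` is not an
identifying code then either `x` is a source, or there is a unique vertex `x₋₁ ≠ x` with
`B₁⁺(x) = B₁⁺(x₋₁) ∪ {x}`. -/
theorem father_of_not_idCode {V : Type} [Countable V] (A : V → V → Prop)
    (hor : ∀ u v : V, ¬ (A u v ∧ A v u)) (x : V)
    (hx : ¬ IsIdCode A ({x}ᶜ : Set V)) :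
    (∀ w : V, ¬ A w x) ∨
      (∃! u : V, u ≠ x ∧ inBall A x = insert x (inBall A u)) := by
  by_cases hsrc : ∀ w : V, ¬ A w x
  · exact Or.inl hsrc
  right
  push_neg at hsrc
  obtain ⟨w0, hw0⟩ := hsrc
  have tf : TwinFree A := oriented_twinFree hor
  rw [IsIdCode, not_and_or] at hx
  rcases hx with hx | hx
  · -- nonemptiness fails: contradiction with existence of in-neighbour w0
    exfalso
    push_neg at hx
    obtain ⟨u, hu⟩ := hx
    have hux : u = x := by
      by_contra h
      have : u ∈ inBall A u ∩ ({x}ᶜ : Set V) := ⟨Set.mem_insert u _, h⟩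
      rw [hu] at this; exact this
    have hw0x : w0 ≠ x := fun h => hor x x ⟨h ▸ hw0, h ▸ hw0⟩
    have hmem : w0 ∈ inBall A u ∩ ({x}ᶜ : Set V) := by
      rw [hux]
      exact ⟨Set.mem_insert_of_mem _ hw0, hw0x⟩
    rw [hu] at hmem; exact hmem
  · -- separation fails
    rw [IsSepCode] at hx
    push_neg at hx
    obtain ⟨u, v, huv, heq⟩ := hx
    have hne : inBall A u ≠ inBall A v := tf u v huv
    have hcases : (x ∈ inBall A u ∧ x ∉ inBall A v) ∨ (x ∈ inBall A v ∧ x ∉ inBall A u) := by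
      by_contra h
      push_neg at h
      apply hne
      ext y
      by_cases hy : y = x
      · subst hy; exact ⟨fun hh => h.1 hh, fun hh => h.2 hh⟩
      · have h1 : y ∈ inBall A u ↔ y ∈ inBall A u ∩ ({x}ᶜ : Set V) := by simp [hy]
        have h2 : y ∈ inBall A v ↔ y ∈ inBall A v ∩ ({x}ᶜ : Set V) := by simp [hy]
        rw [h1, heq, ← h2]
    obtain ⟨w, hwx, hball⟩ :
        ∃ w : V, w ≠ x ∧ inBall A x = insert x (inBall A w) := by
      rcases hcases with ⟨h1, h2⟩ | ⟨h1, h2⟩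
      · obtain ⟨_, hvx, hball⟩ := key_aux hor huv heq h1 h2
        exact ⟨v, hvx, hball⟩
      · obtain ⟨_, hux', hball⟩ := key_aux hor huv.symm heq.symm h1 h2
        exact ⟨u, hux', hball⟩
    refine ⟨w, ⟨hwx, hball⟩, ?_⟩
    rintro w' ⟨hw'x, hball'⟩
    have h1 : x ∉ inBall A w := x_not_mem hor hwx hball
    have h2 : x ∉ inBall A w' := x_not_mem hor hw'x hball'
    by_contra hne'
    apply tf w' w hne'
    ext y
    by_cases hy : y = x
    · subst hy; simp [h1, h2]
    · have e : insert x (inBall A w') = insert x (inBall A w) := hball'.symm.trans hball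
      have hy1 : y ∈ inBall A w' ↔ y ∈ insert x (inBall A w') := by
        simp [Set.mem_insert_iff, hy]
      have hy2 : y ∈ inBall A w ↔ y ∈ insert x (inBall A w) := by
        simp [Set.mem_insert_iff, hy]
      rw [hy1, e, ← hy2]
end

section
/- Let H be an oriented graph and D a digraph in the family Ψ(H), constructed by replacing each source vertex x of H by a finite-source transitive tree T_x, each non-source vertex by an infinite-source transitive tree T_x, and for each arc x→y of H choosing a subset V_{x→y} ⊆ V(T_x) and adding all arcs from every vertex of V_{x→y} to every vertex of T_y. Then the only identifying code of D is its whole vertex set. -/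
lemma exists_ncard_min' {α : Type} (T : Set α) (hT : T.Nonempty) (f : α → ℕ) :
    ∃ m ∈ T, ∀ y ∈ T, f m ≤ f y := by
  obtain ⟨y0, hy0⟩ := hT
  have hne : {n | ∃ y ∈ T, f y = n}.Nonempty := ⟨f y0, y0, hy0, rfl⟩
  obtain ⟨m, hm, hfm⟩ := Nat.sInf_mem hne
  exact ⟨m, hm, fun y hy => by rw [hfm]; exact Nat.sInf_le ⟨y, hy, rfl⟩⟩

/-- Let `H` be an oriented graph and let `D ∈ Ψ(H)` be built by replacing each source
vertex `i` of `H` by an fst-tree `(V i, A i)`, each non-source vertex by an ist-tree, and,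
for each arc `i → j` of `H`, adding all arcs from a chosen set `S i j ⊆ V i` to all of
`V j`. Then the only identifying code of `D` is its whole vertex set. -/
theorem psi_only_idCode_univ {I : Type} (H : I → I → Prop)
    (hH : ∀ i j : I, ¬ (H i j ∧ H j i))
    (V : I → Type) [Countable (Σ i, V i)]
    (A : ∀ i, V i → V i → Prop)
    (hSTT : ∀ i, IsSourceTransTree (A i))
    (hfst : ∀ i, (∀ j, ¬ H j i) → ∀ u : V i, (inBall (A i) u).Finite)
    (hist : ∀ i, (∃ j, H j i) → ∀ u : V i, (inBall (A i) u).Infinite)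
    (S : ∀ i j : I, Set (V i))
    (DA : (Σ i, V i) → (Σ i, V i) → Prop)
    (hDin : ∀ i (u v : V i), DA ⟨i, u⟩ ⟨i, v⟩ ↔ A i u v)
    (hDcross : ∀ i j : I, i ≠ j → ∀ (u : V i) (v : V j),
      DA ⟨i, u⟩ ⟨j, v⟩ ↔ (H i j ∧ u ∈ S i j)) :
    ∀ C : Set (Σ i, V i), IsIdCode DA C → C = Set.univ := by
  intro C hC
  apply Set.eq_univ_of_forall
  rintro ⟨i, u⟩
  by_contra huC
  obtain ⟨asym, tot, trans, inter, dich⟩ := hSTT i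
  have irr : ∀ x : V i, ¬ A i x x := fun x h => asym x x ⟨h, h⟩
  have memBall : ∀ x w : V i, w ∈ inBall (A i) x ↔ w = x ∨ A i w x :=
    fun x w => Set.mem_insert_iff
  have ballMono : ∀ x y : V i, y ∈ inBall (A i) x → inBall (A i) y ⊆ inBall (A i) x := by
    intro x y hyx
    obtain ⟨z, hz⟩ := inter x y
    have hyz : y ∈ inBall (A i) z := by
      rw [← hz]; exact ⟨hyx, Set.mem_insert _ _⟩
    have hz2 : z ∈ inBall (A i) x ∩ inBall (A i) y := by
      rw [hz]; exact Set.mem_insert _ _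
    have hyez : y = z := by
      rcases (memBall z y).1 hyz with h | h
      · exact h
      · rcases (memBall y z).1 hz2.2 with h2 | h2
        · exact h2.symm
        · exact absurd ⟨h, h2⟩ (asym y z)
    intro w hw
    have hw2 : w ∈ inBall (A i) x ∩ inBall (A i) y := by
      rw [hz, ← hyez]; exact hw
    exact hw2.1
  have huB : u ∈ inBall (A i) u := Set.mem_insert _ _
  have hAu : ∀ y ∈ inBall (A i) u, y ≠ u → A i y u := by
    intro y hy hne
    rcases (memBall u y).1 hy with h | h
    · exact absurd h hne
    · exact h
  have hSu : ∀ z ∈ inBall (A i) u, ¬ A i u z := by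
    intro z hz h
    rcases (memBall u z).1 hz with h2 | h2
    · exact irr u (h2 ▸ h)
    · exact asym u z ⟨h, h2⟩
  set Ci : Set (V i) := {w | (⟨i, w⟩ : Σ i, V i) ∈ C} with hCidef
  have huCi : u ∉ Ci := huC
  have memSame : ∀ x w : V i,
      (⟨i, w⟩ : Σ i, V i) ∈ inBall DA ⟨i, x⟩ ↔ w ∈ inBall (A i) x := by
    intro x w
    constructor
    · intro h
      rcases Set.mem_insert_iff.1 h with h | h
      · left
        simpa using h
      · exact Set.mem_insert_of_mem _ ((hDin i w x).1 h)
    · intro h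
      rcases (memBall x w).1 h with h | h
      · subst h; exact Set.mem_insert _ _
      · exact Set.mem_insert_of_mem _ ((hDin i w x).2 h)
  have memCross : ∀ (x : V i) (j : I) (w : V j), j ≠ i →
      ((⟨j, w⟩ : Σ i, V i) ∈ inBall DA ⟨i, x⟩ ↔ H j i ∧ w ∈ S j i) := by
    intro x j w hj
    constructor
    · intro h
      rcases Set.mem_insert_iff.1 h with h | h
      · exact absurd (congrArg Sigma.fst h) hj
      · exact (hDcross j i hj w x).1 h
    · intro h
      exact Set.mem_insert_of_mem _ ((hDcross j i hj w x).2 h)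
  have reduce : ∀ v : V i, inBall (A i) u ∩ Ci = inBall (A i) v ∩ Ci →
      inBall DA ⟨i, u⟩ ∩ C = inBall DA ⟨i, v⟩ ∩ C := by
    intro v h
    ext p
    obtain ⟨j, w⟩ := p
    by_cases hj : i = j
    · subst hj
      constructor
      · rintro ⟨h1, h2⟩
        have hw : w ∈ inBall (A i) v ∩ Ci := by
          rw [← h]; exact ⟨(memSame u w).1 h1, h2⟩
        exact ⟨(memSame v w).2 hw.1, h2⟩
      · rintro ⟨h1, h2⟩
        have hw : w ∈ inBall (A i) u ∩ Ci := by
          rw [h]; exact ⟨(memSame v w).1 h1, h2⟩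
        exact ⟨(memSame u w).2 hw.1, h2⟩
    · have hj' : j ≠ i := fun h => hj h.symm
      constructor
      · rintro ⟨h1, h2⟩
        exact ⟨(memCross v j w hj').2 ((memCross u j w hj').1 h1), h2⟩
      · rintro ⟨h1, h2⟩
        exact ⟨(memCross u j w hj').2 ((memCross v j w hj').1 h1), h2⟩
  have sep : ∀ v : V i, v ≠ u → inBall (A i) u ∩ Ci ≠ inBall (A i) v ∩ Ci := by
    intro v hvu h
    have hne : (⟨i, u⟩ : Σ i, V i) ≠ ⟨i, v⟩ := by
      intro hh
      apply hvu
      simpa using hh.symm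
    exact hC.2 ⟨i, u⟩ ⟨i, v⟩ hne (reduce v h)
  rcases dich with hfin | hinf
  · -- finite case: the tree containing `u` is an fst-tree, so `i` is a source
    have hsource : ∀ j, ¬ H j i := fun j hj => hist i ⟨j, hj⟩ u (hfin u)
    obtain ⟨p, hp⟩ := hC.1 ⟨i, u⟩
    obtain ⟨j, w⟩ := p
    by_cases hj : i = j
    · subst hj
      have hwM : w ∈ inBall (A i) u ∩ Ci := ⟨(memSame u w).1 hp.1, hp.2⟩
      set M : Set (V i) := inBall (A i) u ∩ Ci with hMdef
      have hMfin : M.Finite := (hfin u).subset Set.inter_subset_left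
      obtain ⟨m, hm, hmin⟩ :=
        exists_ncard_min' M ⟨w, hwM⟩ (fun y => ({z ∈ M | A i y z}).ncard)
      have hmB : m ∈ inBall (A i) u := hm.1
      have hmax : ∀ c ∈ M, ¬ A i m c := by
        intro c hc hac
        have hSmFin : {z ∈ M | A i m z}.Finite := hMfin.subset (Set.sep_subset _ _)
        have hsub : {z ∈ M | A i c z} ⊆ {z ∈ M | A i m z} := by
          rintro z ⟨hzM, hz⟩
          exact ⟨hzM, trans u m hmB c hc.1 z hzM.1 hac hz⟩
        have hss : {z ∈ M | A i c z} ⊂ {z ∈ M | A i m z} :=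
          (Set.ssubset_iff_of_subset hsub).2 ⟨c, ⟨hc, hac⟩, fun h => irr c h.2⟩
        exact Nat.lt_irrefl _
          (lt_of_lt_of_le (Set.ncard_lt_ncard hss hSmFin) (hmin c hc))
      have heq : inBall (A i) u ∩ Ci = inBall (A i) m ∩ Ci := by
        ext z
        constructor
        · rintro ⟨hzB, hzC⟩
          refine ⟨?_, hzC⟩
          by_cases hzm : z = m
          · subst hzm; exact Set.mem_insert _ _
          · rcases tot u z hzB m hmB hzm with h | h
            · exact Set.mem_insert_of_mem _ h
            · exact absurd h (hmax z ⟨hzB, hzC⟩)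
        · rintro ⟨hzB, hzC⟩
          exact ⟨ballMono u m hmB hzB, hzC⟩
      have hmu : m ≠ u := fun h => huCi (h ▸ hm.2)
      exact sep m hmu heq
    · exact hsource j ((memCross u j w (fun h => hj h.symm)).1 hp.1).1
  · -- infinite case: the tree containing `u` is an ist-tree
    have hBinf := (hinf u).1
    have hSfin := (hinf u).2
    obtain ⟨y0, hy0⟩ := (hBinf.diff (Set.finite_singleton u)).nonempty
    have hy0B : y0 ∈ inBall (A i) u := hy0.1
    have hy0u : y0 ≠ u := hy0.2
    set T : Set (V i) :=
      {y | y ∈ inBall (A i) u ∧ ({z ∈ inBall (A i) u | A i y z}).Nonempty} with hTdef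
    have hy0T : y0 ∈ T := ⟨hy0B, ⟨u, huB, hAu y0 hy0B hy0u⟩⟩
    obtain ⟨m, hmT, hmin⟩ :=
      exists_ncard_min' T ⟨y0, hy0T⟩
        (fun y => ({z ∈ inBall (A i) u | A i y z}).ncard)
    have hmB : m ∈ inBall (A i) u := hmT.1
    have hSm : {z ∈ inBall (A i) u | A i m z} = {u} := by
      refine Set.eq_singleton_iff_nonempty_unique_mem.2 ⟨hmT.2, ?_⟩
      rintro z ⟨hzB, hmz⟩
      by_contra hzu
      have hzT : z ∈ T := ⟨hzB, ⟨u, huB, hAu z hzB hzu⟩⟩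
      have hsub : {w ∈ inBall (A i) u | A i z w} ⊆ {w ∈ inBall (A i) u | A i m w} := by
        rintro w ⟨hwB, hzw⟩
        exact ⟨hwB, trans u m hmB z hzB w hwB hmz hzw⟩
      have hss : {w ∈ inBall (A i) u | A i z w} ⊂ {w ∈ inBall (A i) u | A i m w} :=
        (Set.ssubset_iff_of_subset hsub).2 ⟨z, ⟨hzB, hmz⟩, fun h => irr z h.2⟩
      exact Nat.lt_irrefl _
        (lt_of_lt_of_le (Set.ncard_lt_ncard hss (hSfin m hmB)) (hmin z hzT))
    have hmu : m ≠ u := by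
      intro h
      obtain ⟨z, hz⟩ := hmT.2
      exact hSu z hz.1 (h ▸ hz.2)
    have heq : inBall (A i) u ∩ Ci = inBall (A i) m ∩ Ci := by
      ext z
      constructor
      · rintro ⟨hzB, hzC⟩
        refine ⟨?_, hzC⟩
        have hzu : z ≠ u := fun h => huCi (h ▸ hzC)
        by_cases hzm : z = m
        · subst hzm; exact Set.mem_insert _ _
        · rcases tot u z hzB m hmB hzm with h | h
          · exact Set.mem_insert_of_mem _ h
          · have hz1 : z ∈ ({u} : Set (V i)) := by
              rw [← hSm]; exact ⟨hzB, h⟩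
            exact absurd hz1 hzu
      · rintro ⟨hzB, hzC⟩
        exact ⟨ballMono u m hmB hzB, hzC⟩
    exact sep m hmu heq
end
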